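/- arXiv:1203.2602 — 2 statements merged into one kernel-verified Lean document; each statement's English description precedes it below -/
import Mathlib

section
/- Fix an integer d ≥ 3 and B ∈ ℝ. There exists θ_c = θ_c(d,B) > 1 such that: for 1 < θ ≤ θ_c, the unique fixed point t_*(θ) of F_{θ,B} is the only fixed point of G_{θ,B} = F_{θ,B} ∘ F_{θ,B}; and for θ > θ_c, G_{θ,B} has exactly three fixed points t^-(θ) < t_*(θ) < t^+(θ), with F_{θ,B}(t^+(θ)) = t^-(θ) and F_{θ,B}(t^-(θ)) = t^+(θ). Moreover the fixed points depend continuously on θ, and t^±(θ) → t_*(θ_c) as θ decreases to θ_c. -/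
open Set Filter

/-- The anti-ferromagnetic Ising belief-propagation map in log-likelihood-ratio
coordinates: `F_{θ,B}(t) = 2B + (d-1) log((e^t + θ)/(θ e^t + 1))`. -/
noncomputable def isingF (d : ℕ) (θ B t : ℝ) : ℝ :=
  2 * B + ((d:ℝ) - 1) * Real.log ((Real.exp t + θ) / (θ * Real.exp t + 1))

open Real Topology

namespace S15

noncomputable def Dn (θ t : ℝ) : ℝ := θ^2 + 1 + 2*θ*Real.cosh t

noncomputable def phi (d : ℕ) (θ t : ℝ) : ℝ := ((d:ℝ)-1)*(θ^2-1) / Dn θ t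

noncomputable def sig (d : ℕ) (θ t : ℝ) : ℝ :=
  Real.log (((d:ℝ)-1)*(θ^2-1)) - Real.log (Dn θ t)

noncomputable def sig1 (θ t : ℝ) : ℝ := -(2*θ*Real.sinh t) / Dn θ t

noncomputable def sig2 (θ t : ℝ) : ℝ :=
  (4*θ^2*(Real.sinh t)^2 - 2*θ*Real.cosh t * Dn θ t) / (Dn θ t)^2

variable {d : ℕ} {θ B t : ℝ}

lemma hc (hd : 3 ≤ d) : 2 ≤ ((d:ℝ) - 1) := by
  have : (3:ℝ) ≤ (d:ℝ) := by exact_mod_cast hd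
  linarith

lemma Dn_pos (hθ : 1 < θ) : 0 < Dn θ t := by
  have h1 : 1 ≤ Real.cosh t := Real.one_le_cosh t
  rw [Dn]; nlinarith

lemma phi_pos (hd : 3 ≤ d) (hθ : 1 < θ) : 0 < phi d θ t := by
  have h := Dn_pos (t := t) hθ
  have hcc := hc hd
  apply div_pos _ h
  nlinarith [mul_pos (sub_pos.2 hθ) (by linarith : (0:ℝ) < θ + 1)]

lemma num_pos (hd : 3 ≤ d) (hθ : 1 < θ) : 0 < ((d:ℝ)-1)*(θ^2-1) := by
  have hcc := hc hd
  nlinarith [mul_pos (sub_pos.2 hθ) (by linarith : (0:ℝ) < θ + 1)]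

lemma sig_eq_log_phi (hd : 3 ≤ d) (hθ : 1 < θ) : sig d θ t = Real.log (phi d θ t) := by
  rw [sig, phi, Real.log_div (num_pos hd hθ).ne' (Dn_pos hθ).ne']

-- denominator identity: (exp t + θ)(θ exp t + 1) = exp t * Dn θ t
lemma denom_identity (θ t : ℝ) :
    (Real.exp t + θ) * (θ * Real.exp t + 1) = Real.exp t * Dn θ t := by
  have h : Real.cosh t = (Real.exp t + Real.exp (-t))/2 := Real.cosh_eq t
  have hx := (Real.exp_pos t).ne'
  rw [Dn, h, Real.exp_neg]
  field_simp
  ring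

lemma exp_add_theta_pos (hθ : 1 < θ) : 0 < Real.exp t + θ := by
  have := Real.exp_pos t; linarith

lemma theta_exp_pos (hθ : 1 < θ) : 0 < θ * Real.exp t + 1 := by
  have := Real.exp_pos t; nlinarith

lemma isingF_eq (hθ : 1 < θ) : isingF d θ B t =
    2*B + ((d:ℝ)-1) * (Real.log (Real.exp t + θ) - Real.log (θ * Real.exp t + 1)) := by
  rw [isingF, Real.log_div (exp_add_theta_pos hθ).ne' (theta_exp_pos hθ).ne']

lemma hasDerivAt_F (hd : 3 ≤ d) (hθ : 1 < θ) :
    HasDerivAt (isingF d θ B) (-phi d θ t) t := by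
  have h1 : HasDerivAt (fun t => Real.exp t + θ) (Real.exp t) t :=
    (Real.hasDerivAt_exp t).add_const θ
  have h2 : HasDerivAt (fun t => θ * Real.exp t + 1) (θ * Real.exp t) t :=
    ((Real.hasDerivAt_exp t).const_mul θ).add_const 1
  have hl1 := h1.log (exp_add_theta_pos (t := t) hθ).ne'
  have hl2 := h2.log (theta_exp_pos (t := t) hθ).ne'
  have h3 := ((hl1.sub hl2).const_mul ((d:ℝ)-1)).const_add (2*B)
  have heq : (fun t => 2*B + ((d:ℝ)-1) *
      (Real.log (Real.exp t + θ) - Real.log (θ * Real.exp t + 1))) = isingF d θ B := by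
    funext s; rw [isingF_eq hθ]
  simp only [Pi.sub_apply] at h3
  rw [heq] at h3
  refine h3.congr_deriv (Eq.symm ?_)
  have hx := Real.exp_pos t
  have h4 := exp_add_theta_pos (t := t) hθ
  have h5 := theta_exp_pos (t := t) hθ
  have hD' : Dn θ t = (Real.exp t + θ)*(θ*Real.exp t+1)/Real.exp t := by
    rw [eq_div_iff (Real.exp_pos t).ne', mul_comm, denom_identity]
  rw [phi, hD']
  field_simp
  ring

end S15

namespace S15
variable {d : ℕ} {θ B t : ℝ}

lemma hasDerivAt_Dn : HasDerivAt (Dn θ) (2*θ*Real.sinh t) t := by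
  exact ((Real.hasDerivAt_cosh t).const_mul (2*θ)).const_add (θ^2+1)

lemma hasDerivAt_sig (hd : 3 ≤ d) (hθ : 1 < θ) :
    HasDerivAt (sig d θ) (sig1 θ t) t := by
  have h := (hasDerivAt_Dn (θ := θ) (t := t)).log (Dn_pos (t := t) hθ).ne'
  have h2 := (h.const_sub (Real.log (((d:ℝ)-1)*(θ^2-1))))
  refine h2.congr_deriv (Eq.symm ?_)
  rw [sig1]; ring

lemma hasDerivAt_phi (hd : 3 ≤ d) (hθ : 1 < θ) :
    HasDerivAt (phi d θ) (phi d θ t * sig1 θ t) t := by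
  have hD := Dn_pos (t := t) hθ
  have h := (hasDerivAt_const t (((d:ℝ)-1)*(θ^2-1))).div (hasDerivAt_Dn (θ := θ) (t := t)) hD.ne'
  refine h.congr_deriv (Eq.symm ?_)
  rw [phi, sig1, div_mul_div_comm, pow_two]
  ring

lemma hasDerivAt_sig1 (hθ : 1 < θ) :
    HasDerivAt (sig1 θ) (sig2 θ t) t := by
  have hD := Dn_pos (t := t) hθ
  have h1 : HasDerivAt (fun t => -(2*θ*Real.sinh t)) (-(2*θ*Real.cosh t)) t := by
    exact ((Real.hasDerivAt_sinh t).const_mul (2*θ)).neg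
  have h := h1.div (hasDerivAt_Dn (θ := θ) (t := t)) hD.ne'
  refine h.congr_deriv (Eq.symm ?_)
  rw [sig2]
  field_simp
  ring

lemma sig2_neg (hθ : 1 < θ) : sig2 θ t < 0 := by
  have hD := Dn_pos (t := t) hθ
  have hch : 1 ≤ Real.cosh t := Real.one_le_cosh t
  have hid : Real.cosh t ^ 2 - Real.sinh t ^ 2 = 1 := Real.cosh_sq_sub_sinh_sq t
  rw [sig2]
  apply div_neg_of_neg_of_pos _ (by positivity)
  -- 4θ² sinh² - 2θ cosh * D < 0  ⟺  2θ cosh (θ²+1) + 4θ² (cosh²-sinh²) > 0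
  have : 2*θ*Real.cosh t * Dn θ t - 4*θ^2*(Real.sinh t)^2
      = 2*θ*Real.cosh t*(θ^2+1) + 4*θ^2 := by
    rw [Dn]; nlinarith [hid]
  nlinarith [this, mul_pos (by linarith : (0:ℝ) < 2*θ) (by linarith : (0:ℝ) < Real.cosh t)]

end S15

namespace S15
variable {d : ℕ} {θ B t : ℝ}

noncomputable def uu (d : ℕ) (θ B t : ℝ) : ℝ := sig d θ t + sig d θ (isingF d θ B t)

noncomputable def uu1 (d : ℕ) (θ B t : ℝ) : ℝ :=
  sig1 θ t - phi d θ t * sig1 θ (isingF d θ B t)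

noncomputable def uu2 (d : ℕ) (θ B t : ℝ) : ℝ :=
  sig2 θ t + (phi d θ t)^2 * sig2 θ (isingF d θ B t)
    - phi d θ t * sig1 θ t * sig1 θ (isingF d θ B t)

lemma hasDerivAt_uu (hd : 3 ≤ d) (hθ : 1 < θ) :
    HasDerivAt (uu d θ B) (uu1 d θ B t) t := by
  have h1 := hasDerivAt_sig (t := t) hd hθ
  have h2 := (hasDerivAt_sig (t := isingF d θ B t) hd hθ).comp t (hasDerivAt_F (B := B) (t := t) hd hθ)
  have h3 := h1.add h2
  simp only [Function.comp_def] at h3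
  refine h3.congr_deriv (Eq.symm ?_)
  rw [uu1]; ring

lemma hasDerivAt_uu1 (hd : 3 ≤ d) (hθ : 1 < θ) :
    HasDerivAt (uu1 d θ B) (uu2 d θ B t) t := by
  have hF := hasDerivAt_F (B := B) (t := t) hd hθ
  have h1 := hasDerivAt_sig1 (θ := θ) (t := t) hθ
  have h2 := (hasDerivAt_sig1 (θ := θ) (t := isingF d θ B t) hθ).comp t hF
  have h3 := hasDerivAt_phi (t := t) hd hθ
  have h4 := h3.mul h2
  have h5 := h1.sub h4
  simp only [Function.comp_def] at h5
  refine h5.congr_deriv (Eq.symm ?_)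
  rw [uu2]; ring

lemma uu2_lt (hd : 3 ≤ d) (hθ : 1 < θ) :
    uu2 d θ B t - (uu1 d θ B t)^2/2 < 0 := by
  have key : ∀ A A2 Bv B2 p : ℝ,
      (A2 + p^2*B2 - p*A*Bv) - (A - p*Bv)^2/2
        = (A2 - A^2/2) + p^2*(B2 - Bv^2/2) := by intros; ring
  rw [uu2, uu1, key]
  have s1 := sig2_neg (θ := θ) (t := t) hθ
  have s2 := sig2_neg (θ := θ) (t := isingF d θ B t) hθ
  have p2 : (0:ℝ) ≤ (phi d θ t)^2 := sq_nonneg _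
  nlinarith [sq_nonneg (sig1 θ t), sq_nonneg (sig1 θ (isingF d θ B t)),
    mul_nonpos_of_nonneg_of_nonpos p2 (le_of_lt (by nlinarith [sq_nonneg (sig1 θ (isingF d θ B t))] :
      sig2 θ (isingF d θ B t) - (sig1 θ (isingF d θ B t))^2/2 < 0))]

lemma uu1_zero_imp (hd : 3 ≤ d) (hθ : 1 < θ) (h : uu1 d θ B t = 0) : uu2 d θ B t < 0 := by
  have := uu2_lt (B := B) (t := t) hd hθ
  rw [h] at this; simpa using this

/-- Master lemma: a differentiable function that is strictly decreasing at each of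
its zeros cannot go from ≤ 0 to ≥ 0. -/
lemma no_up_crossing {g g' : ℝ → ℝ} (hg : ∀ x, HasDerivAt g (g' x) x)
    (hneg : ∀ x, g x = 0 → g' x < 0) {a b : ℝ} (hab : a < b)
    (hga : g a ≤ 0) (hgb : 0 ≤ g b) : False := by
  have hcont : Continuous g := by
    rw [continuous_iff_continuousAt]; exact fun x => (hg x).continuousAt
  -- helper: near a zero with negative derivative, g > 0 strictly left, g < 0 strictly right
  have right : ∀ c e : ℝ, g c = 0 → c < e → ∃ z, c < z ∧ z < e ∧ g z < 0 := by
    intro c e hgc hce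
    have hs : Tendsto (slope g c) (𝓝[≠] c) (𝓝 (g' c)) :=
      hasDerivAt_iff_tendsto_slope.1 (hg c)
    have h1 : ∀ᶠ z in 𝓝[≠] c, slope g c z < 0 :=
      hs.eventually_lt_const (hneg c hgc)
    have h2 : ∀ᶠ z in 𝓝[>] c, slope g c z < 0 :=
      h1.filter_mono (nhdsWithin_mono c (fun x hx => ne_of_gt hx))
    have h3 : ∀ᶠ z in 𝓝[>] c, z < e :=
      eventually_mem_set.2 (mem_nhdsWithin_of_mem_nhds (Iio_mem_nhds hce))
    have h4 : ∀ᶠ z in 𝓝[>] c, c < z := eventually_mem_set.2 self_mem_nhdsWithin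
    obtain ⟨z, hz1, hz2, hz3⟩ := (h2.and (h3.and h4)).exists
    refine ⟨z, hz3, hz2, ?_⟩
    have hzc : 0 < z - c := by linarith
    rw [slope_def_field, hgc] at hz1
    rcases div_neg_iff.1 hz1 with ⟨h5, h6⟩ | ⟨h5, h6⟩ <;> linarith
  -- WLOG g is strictly positive at the right endpoint
  have main : ∀ a' b' : ℝ, a' < b' → g a' ≤ 0 → 0 < g b' → False := by
    intro a' b' hab' hga' hgb'
    set Z := Icc a' b' ∩ g ⁻¹' {0} with hZ
    have hZcpt : IsCompact Z :=
      isCompact_Icc.inter_right (IsClosed.preimage hcont isClosed_singleton)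
    have hZne : Z.Nonempty := by
      have h0 : (0:ℝ) ∈ Icc (g a') (g b') := ⟨hga', le_of_lt hgb'⟩
      obtain ⟨z, hz, hz0⟩ := intermediate_value_Icc (le_of_lt hab') hcont.continuousOn h0
      exact ⟨z, hz, hz0⟩
    set c := sSup Z with hc
    have hcZ : c ∈ Z := hZcpt.sSup_mem hZne
    have hgc : g c = 0 := hcZ.2
    have hcb : c < b' := lt_of_le_of_ne hcZ.1.2 (fun h => (ne_of_gt hgb') (h ▸ hgc))
    obtain ⟨z, hz1, hz2, hz3⟩ := right c b' hgc hcb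
    have h0 : (0:ℝ) ∈ Icc (g z) (g b') := ⟨le_of_lt hz3, le_of_lt hgb'⟩
    obtain ⟨w, hw, hw0⟩ := intermediate_value_Icc (le_of_lt hz2) hcont.continuousOn h0
    have hwZ : w ∈ Z := ⟨⟨by linarith [hcZ.1.1, hw.1], hw.2⟩, hw0⟩
    have := le_csSup hZcpt.bddAbove hwZ
    linarith [hw.1]
  rcases eq_or_lt_of_le hgb with hb0 | hb0
  · have hex : ∃ z, slope g b z < 0 ∧ a < z ∧ z < b := by
      have hs : Tendsto (slope g b) (𝓝[≠] b) (𝓝 (g' b)) :=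
        hasDerivAt_iff_tendsto_slope.1 (hg b)
      have h1 : ∀ᶠ z in 𝓝[≠] b, slope g b z < 0 :=
        hs.eventually_lt_const (hneg b hb0.symm)
      have h2 : ∀ᶠ z in 𝓝[<] b, slope g b z < 0 :=
        h1.filter_mono (nhdsWithin_mono b (fun x hx => ne_of_lt hx))
      have h3 : ∀ᶠ z in 𝓝[<] b, a < z :=
        eventually_mem_set.2 (mem_nhdsWithin_of_mem_nhds (Ioi_mem_nhds hab))
      have h4 : ∀ᶠ z in 𝓝[<] b, z < b := eventually_mem_set.2 self_mem_nhdsWithin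
      obtain ⟨z, hz⟩ := (h2.and (h3.and h4)).exists
      exact ⟨z, hz.1, hz.2.1, hz.2.2⟩
    obtain ⟨z, hz1, hz2, hz3⟩ := hex
    have hgz : 0 < g z := by
      rw [slope_def_field, hb0.symm] at hz1
      have : z - b < 0 := by linarith
      rcases div_neg_iff.1 hz1 with ⟨h5, h6⟩ | ⟨h5, h6⟩ <;> linarith
    exact main a z hz2 hga hgz
  · exact main a b hab hga hb0

end S15

namespace S15
variable {d : ℕ} {θ B t : ℝ}

lemma F_strictAnti (hd : 3 ≤ d) (hθ : 1 < θ) : StrictAnti (isingF d θ B) :=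
  strictAnti_of_hasDerivAt_neg (fun t => hasDerivAt_F hd hθ)
    (fun t => neg_neg_iff_pos.2 (phi_pos hd hθ) |>.le.lt_of_ne (by
      exact ne_of_lt (neg_neg_iff_pos.2 (phi_pos hd hθ))) )

lemma F_lt (hd : 3 ≤ d) (hθ : 1 < θ) :
    isingF d θ B t < 2*B + ((d:ℝ)-1)*Real.log θ := by
  have hx := Real.exp_pos t
  have h4 := exp_add_theta_pos (t := t) hθ
  have h5 := theta_exp_pos (t := t) hθ
  have hθ0 : (0:ℝ) < θ := by linarith
  have harg : (Real.exp t + θ) / (θ * Real.exp t + 1) < θ := by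
    rw [div_lt_iff₀ h5]
    nlinarith [mul_pos (mul_pos (sub_pos.2 hθ) (by linarith : (0:ℝ) < θ+1)) hx]
  have := Real.log_lt_log (div_pos h4 h5) harg
  rw [isingF]
  have hcc := hc (d := d) hd
  nlinarith [this]

lemma F_gt (hd : 3 ≤ d) (hθ : 1 < θ) :
    2*B - ((d:ℝ)-1)*Real.log θ < isingF d θ B t := by
  have hx := Real.exp_pos t
  have h4 := exp_add_theta_pos (t := t) hθ
  have h5 := theta_exp_pos (t := t) hθ
  have hθ0 : (0:ℝ) < θ := by linarith
  have harg : θ⁻¹ < (Real.exp t + θ) / (θ * Real.exp t + 1) := by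
    rw [lt_div_iff₀ h5, inv_mul_eq_div, div_lt_iff₀ hθ0]
    nlinarith [mul_pos (mul_pos (sub_pos.2 hθ) (by linarith : (0:ℝ) < θ+1)) hx]
  have := Real.log_lt_log (by positivity) harg
  rw [Real.log_inv] at this
  rw [isingF]
  have hcc := hc (d := d) hd
  nlinarith [this]

end S15

namespace S15
variable {d : ℕ} {θ B t : ℝ}

lemma hasDerivAt_G (hd : 3 ≤ d) (hθ : 1 < θ) :
    HasDerivAt (fun t => isingF d θ B (isingF d θ B t))
      (phi d θ (isingF d θ B t) * phi d θ t) t := by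
  have h := (hasDerivAt_F (B := B) (t := isingF d θ B t) hd hθ).comp t
    (hasDerivAt_F (B := B) (t := t) hd hθ)
  simp only [Function.comp_def] at h
  refine h.congr_deriv (Eq.symm ?_); ring

lemma G_cont (hd : 3 ≤ d) (hθ : 1 < θ) :
    Continuous (fun t => isingF d θ B (isingF d θ B t)) := by
  rw [continuous_iff_continuousAt]
  exact fun x => (hasDerivAt_G hd hθ).continuousAt

lemma F_cont (hd : 3 ≤ d) (hθ : 1 < θ) : Continuous (isingF d θ B) := by
  rw [continuous_iff_continuousAt]
  exact fun x => (hasDerivAt_F hd hθ).continuousAt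

/-- Between two fixed points of `G` there is a zero of `uu`. -/
lemma uu_zero_between (hd : 3 ≤ d) (hθ : 1 < θ) {z1 z2 : ℝ} (h12 : z1 < z2)
    (h1 : isingF d θ B (isingF d θ B z1) = z1) (h2 : isingF d θ B (isingF d θ B z2) = z2) :
    ∃ ξ ∈ Ioo z1 z2, uu d θ B ξ = 0 := by
  obtain ⟨ξ, hξ, hs⟩ := exists_hasDerivAt_eq_slope (fun t => isingF d θ B (isingF d θ B t))
    (fun t => phi d θ (isingF d θ B t) * phi d θ t) h12
    (G_cont hd hθ).continuousOn (fun x _ => hasDerivAt_G hd hθ)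
  refine ⟨ξ, hξ, ?_⟩
  rw [h1, h2, div_self (ne_of_gt (by linarith : (0:ℝ) < z2 - z1))] at hs
  rw [uu, sig_eq_log_phi hd hθ, sig_eq_log_phi hd hθ,
    ← Real.log_mul (phi_pos hd hθ).ne' (phi_pos hd hθ).ne', mul_comm, hs, Real.log_one]

/-- `uu` cannot have three distinct zeros. -/
lemma uu_three_zeros (hd : 3 ≤ d) (hθ : 1 < θ) {x1 x2 x3 : ℝ} (h12 : x1 < x2) (h23 : x2 < x3)
    (hu1 : uu d θ B x1 = 0) (hu2 : uu d θ B x2 = 0) (hu3 : uu d θ B x3 = 0) : False := by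
  have hcont : Continuous (uu d θ B) := by
    rw [continuous_iff_continuousAt]
    exact fun x => (hasDerivAt_uu hd hθ).continuousAt
  obtain ⟨η1, hη1, he1⟩ := exists_hasDerivAt_eq_zero h12 hcont.continuousOn (hu1.trans hu2.symm)
    (fun x _ => hasDerivAt_uu hd hθ)
  obtain ⟨η2, hη2, he2⟩ := exists_hasDerivAt_eq_zero h23 hcont.continuousOn (hu2.trans hu3.symm)
    (fun x _ => hasDerivAt_uu hd hθ)
  exact no_up_crossing (fun x => hasDerivAt_uu1 hd hθ) (fun x hx => uu1_zero_imp hd hθ hx)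
    (lt_trans hη1.2 hη2.1) (le_of_eq he1) (ge_of_eq he2)

/-- `G` has at most three fixed points. -/
lemma G_at_most_three (hd : 3 ≤ d) (hθ : 1 < θ) {w x y z : ℝ}
    (hwx : w < x) (hxy : x < y) (hyz : y < z)
    (hw : isingF d θ B (isingF d θ B w) = w) (hx : isingF d θ B (isingF d θ B x) = x)
    (hy : isingF d θ B (isingF d θ B y) = y) (hz : isingF d θ B (isingF d θ B z) = z) :
    False := by
  obtain ⟨ξ1, hξ1, h1⟩ := uu_zero_between hd hθ hwx hw hx
  obtain ⟨ξ2, hξ2, h2⟩ := uu_zero_between hd hθ hxy hx hy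
  obtain ⟨ξ3, hξ3, h3⟩ := uu_zero_between hd hθ hyz hy hz
  exact uu_three_zeros hd hθ (lt_trans hξ1.2 hξ2.1) (lt_trans hξ2.2 hξ3.1) h1 h2 h3

end S15

namespace S15
variable {d : ℕ} {θ B t : ℝ}

lemma G_fix_ts (hfix : isingF d θ B t = t) : isingF d θ B (isingF d θ B t) = t := by
  rw [hfix, hfix]

/-- Subcritical: no genuine 2-cycles when `phi d θ tst ≤ 1`. -/
lemma no_two_cycle (hd : 3 ≤ d) (hθ : 1 < θ) {tst : ℝ}
    (hfix : isingF d θ B tst = tst) (hΔ : phi d θ tst ≤ 1) {t s : ℝ} (hts' : t < s)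
    (hFt : isingF d θ B t = s) (hFs : isingF d θ B s = t) : False := by
  have hA := F_strictAnti (B := B) hd hθ
  have htst1 : t < tst := by
    by_contra h
    push_neg at h
    have := hA.antitone h
    rw [hFt, hfix] at this
    linarith
  have htst2 : tst < s := by
    by_contra h
    push_neg at h
    have := hA.antitone h
    rw [hFs, hfix] at this
    linarith
  have hGt : isingF d θ B (isingF d θ B t) = t := by rw [hFt, hFs]
  have hGs : isingF d θ B (isingF d θ B s) = s := by rw [hFs, hFt]
  obtain ⟨ξ1, hξ1, h1⟩ := uu_zero_between hd hθ htst1 hGt (G_fix_ts hfix)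
  obtain ⟨ξ2, hξ2, h2⟩ := uu_zero_between hd hθ htst2 (G_fix_ts hfix) hGs
  have hutst : uu d θ B tst = 2 * Real.log (phi d θ tst) := by
    rw [uu, hfix, sig_eq_log_phi hd hθ]; ring
  rcases lt_or_eq_of_le hΔ with hlt | heq
  · -- phi < 1 : uu tst < 0
    have hneg : uu d θ B tst < 0 := by
      rw [hutst]
      have := Real.log_neg (phi_pos (t := tst) hd hθ) hlt
      linarith
    have hcont : Continuous (uu d θ B) := by
      rw [continuous_iff_continuousAt]
      exact fun x => (hasDerivAt_uu hd hθ).continuousAt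
    obtain ⟨ζ1, hζ1, hs1⟩ := exists_hasDerivAt_eq_slope (uu d θ B) (uu1 d θ B) hξ1.2
      hcont.continuousOn (fun x _ => hasDerivAt_uu hd hθ)
    obtain ⟨ζ2, hζ2, hs2⟩ := exists_hasDerivAt_eq_slope (uu d θ B) (uu1 d θ B) hξ2.1
      hcont.continuousOn (fun x _ => hasDerivAt_uu hd hθ)
    have hv1 : uu1 d θ B ζ1 < 0 := by
      rw [hs1, h1]
      apply div_neg_of_neg_of_pos <;> simp [hneg] <;> linarith [hξ1.2]
    have hv2 : 0 < uu1 d θ B ζ2 := by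
      rw [hs2, h2]
      apply div_pos <;> simp [hneg] <;> linarith [hξ2.1]
    exact no_up_crossing (fun x => hasDerivAt_uu1 hd hθ) (fun x hx => uu1_zero_imp hd hθ hx)
      (lt_trans hζ1.2 hζ2.1) (le_of_lt hv1) (le_of_lt hv2)
  · have hzero : uu d θ B tst = 0 := by rw [hutst, heq, Real.log_one]; ring
    exact uu_three_zeros hd hθ hξ1.2 hξ2.1 h1 hzero h2

/-- Supercritical: points strictly above/below `tst` where `G` crosses. -/
lemma exists_G_cross (hd : 3 ≤ d) (hθ : 1 < θ) {tst : ℝ}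
    (hfix : isingF d θ B tst = tst) (hΔ : 1 < phi d θ tst) :
    ∃ p q, p < tst ∧ tst < q ∧ isingF d θ B (isingF d θ B p) = p ∧
      isingF d θ B (isingF d θ B q) = q := by
  set G := fun t => isingF d θ B (isingF d θ B t) with hGdef
  have hGfix : G tst = tst := G_fix_ts hfix
  have hG := hasDerivAt_G (B := B) (t := tst) hd hθ
  rw [hfix] at hG
  have hphi := phi_pos (t := tst) hd hθ
  have hgt1 : (1:ℝ) < phi d θ tst * phi d θ tst := by nlinarith
  have hs : Tendsto (slope G tst) (𝓝[≠] tst) (𝓝 (phi d θ tst * phi d θ tst)) :=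
    hasDerivAt_iff_tendsto_slope.1 hG
  have hev : ∀ᶠ z in 𝓝[≠] tst, 1 < slope G tst z := hs.eventually_const_lt hgt1
  have hcont : Continuous G := G_cont hd hθ
  -- right crossing
  have hq : ∃ q, tst < q ∧ G q = q := by
    have h2 : ∀ᶠ z in 𝓝[>] tst, 1 < slope G tst z :=
      hev.filter_mono (nhdsWithin_mono tst (fun x hx => ne_of_gt hx))
    have h4 : ∀ᶠ z in 𝓝[>] tst, tst < z := eventually_mem_set.2 self_mem_nhdsWithin
    obtain ⟨x, hx1, hx2⟩ := (h2.and h4).exists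
    have hGx : x < G x := by
      rw [slope_def_field, hGfix] at hx1
      have h5 : 0 < x - tst := by linarith
      have := (one_lt_div h5).1 hx1
      linarith
    set M := max (x+1) (2*B + ((d:ℝ)-1)*Real.log θ) with hM
    have hxM : x < M := lt_of_lt_of_le (by linarith) (le_max_left _ _)
    have hGM : G M < M := lt_of_lt_of_le (F_lt hd hθ) (le_max_right _ _)
    have h0 : (0:ℝ) ∈ Icc (G M - M) (G x - x) := ⟨by linarith, by linarith⟩
    obtain ⟨q, hq1, hq2⟩ := intermediate_value_Icc' (le_of_lt hxM)
      (hcont.sub continuous_id).continuousOn h0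
    refine ⟨q, lt_of_lt_of_le hx2 hq1.1, ?_⟩
    simp only [Pi.sub_apply, id_eq] at hq2
    linarith [hq2]
  -- left crossing
  have hp : ∃ p, p < tst ∧ G p = p := by
    have h2 : ∀ᶠ z in 𝓝[<] tst, 1 < slope G tst z :=
      hev.filter_mono (nhdsWithin_mono tst (fun x hx => ne_of_lt hx))
    have h4 : ∀ᶠ z in 𝓝[<] tst, z < tst := eventually_mem_set.2 self_mem_nhdsWithin
    obtain ⟨x, hx1, hx2⟩ := (h2.and h4).exists
    have hGx : G x < x := by
      rw [slope_def_field, hGfix] at hx1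
      have h5 : x - tst < 0 := by linarith
      rw [lt_div_iff_of_neg h5] at hx1
      linarith
    set m := min (x-1) (2*B - ((d:ℝ)-1)*Real.log θ) with hm
    have hmx : m < x := lt_of_le_of_lt (min_le_left _ _) (by linarith)
    have hGm : m < G m := lt_of_le_of_lt (min_le_right _ _) (F_gt hd hθ)
    have h0 : (0:ℝ) ∈ Icc (G x - x) (G m - m) := ⟨by linarith, by linarith⟩
    obtain ⟨p, hp1, hp2⟩ := intermediate_value_Icc' (le_of_lt hmx)
      (hcont.sub continuous_id).continuousOn h0
    refine ⟨p, lt_of_le_of_lt hp1.2 hx2, ?_⟩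
    simp only [Pi.sub_apply, id_eq] at hp2
    linarith [hp2]
  obtain ⟨q, hq1, hq2⟩ := hq
  obtain ⟨p, hp1, hp2⟩ := hp
  exact ⟨p, q, hp1, hq1, hp2, hq2⟩

end S15

namespace S15
variable {d : ℕ} {θ B t : ℝ}

lemma log_arg_nonpos (hθ : 1 < θ) (ht : 0 ≤ t) :
    Real.log ((Real.exp t + θ)/(θ*Real.exp t+1)) ≤ 0 := by
  have hx : 1 ≤ Real.exp t := Real.one_le_exp ht
  have h5 := theta_exp_pos (t := t) hθ
  apply Real.log_nonpos (by positivity)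
  rw [div_le_one h5]; nlinarith

lemma log_arg_nonneg (hθ : 1 < θ) (ht : t ≤ 0) :
    0 ≤ Real.log ((Real.exp t + θ)/(θ*Real.exp t+1)) := by
  have hx : Real.exp t ≤ 1 := Real.exp_le_one_iff.2 ht
  have h5 := theta_exp_pos (t := t) hθ
  apply Real.log_nonneg
  rw [le_div_iff₀ h5]; nlinarith

lemma ts_sign_nonneg (hd : 3 ≤ d) (hθ : 1 < θ) {tst : ℝ} (hB : 0 ≤ B)
    (hfix : isingF d θ B tst = tst) : 0 ≤ tst ∧ tst ≤ 2*B := by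
  have hcc := hc (d := d) hd
  have h1 : 0 ≤ tst := by
    by_contra h
    push_neg at h
    have hL := log_arg_nonneg (t := tst) hθ (le_of_lt h)
    rw [isingF] at hfix
    nlinarith
  refine ⟨h1, ?_⟩
  have hL := log_arg_nonpos (t := tst) hθ h1
  rw [isingF] at hfix
  nlinarith

lemma ts_sign_nonpos (hd : 3 ≤ d) (hθ : 1 < θ) {tst : ℝ} (hB : B ≤ 0)
    (hfix : isingF d θ B tst = tst) : tst ≤ 0 ∧ 2*B ≤ tst := by
  have hcc := hc (d := d) hd
  have h1 : tst ≤ 0 := by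
    by_contra h
    push_neg at h
    have hL := log_arg_nonpos (t := tst) hθ (le_of_lt h)
    rw [isingF] at hfix
    nlinarith
  refine ⟨h1, ?_⟩
  have hL := log_arg_nonneg (t := tst) hθ h1
  rw [isingF] at hfix
  nlinarith

lemma cosh_ts_le (hd : 3 ≤ d) (hθ : 1 < θ) {tst : ℝ}
    (hfix : isingF d θ B tst = tst) : Real.cosh tst ≤ Real.cosh (2*B) := by
  rw [Real.cosh_le_cosh]
  rcases le_or_gt 0 B with hB | hB
  · obtain ⟨h1, h2⟩ := ts_sign_nonneg hd hθ hB hfix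
    rw [abs_of_nonneg h1, abs_of_nonneg (by linarith)]; exact h2
  · obtain ⟨h1, h2⟩ := ts_sign_nonpos hd hθ (le_of_lt hB) hfix
    rw [abs_of_nonpos h1, abs_of_nonpos (by linarith)]; linarith

/-- pointwise monotonicity of F in θ, for t ≥ 0 -/
lemma F_theta_mono_nonneg (hd : 3 ≤ d) {θ1 θ2 : ℝ} (h1 : 1 < θ1) (h12 : θ1 ≤ θ2)
    (ht : 0 ≤ t) : isingF d θ2 B t ≤ isingF d θ1 B t := by
  have hx : 1 ≤ Real.exp t := Real.one_le_exp ht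
  have h2 : 1 < θ2 := lt_of_lt_of_le h1 h12
  have ha1 := exp_add_theta_pos (t := t) h1
  have ha2 := exp_add_theta_pos (t := t) h2
  have hb1 := theta_exp_pos (t := t) h1
  have hb2 := theta_exp_pos (t := t) h2
  have hcc := hc (d := d) hd
  have harg : (Real.exp t + θ2)/(θ2*Real.exp t+1) ≤ (Real.exp t + θ1)/(θ1*Real.exp t+1) := by
    rw [div_le_div_iff₀ hb2 hb1]
    nlinarith [mul_nonneg (sub_nonneg.2 h12) (by nlinarith : (0:ℝ) ≤ Real.exp t^2 - 1)]
  have := Real.log_le_log (by positivity) harg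
  rw [isingF, isingF]
  nlinarith

lemma F_theta_mono_nonpos (hd : 3 ≤ d) {θ1 θ2 : ℝ} (h1 : 1 < θ1) (h12 : θ1 ≤ θ2)
    (ht : t ≤ 0) : isingF d θ1 B t ≤ isingF d θ2 B t := by
  have hx : Real.exp t ≤ 1 := Real.exp_le_one_iff.2 ht
  have hx0 := Real.exp_pos t
  have h2 : 1 < θ2 := lt_of_lt_of_le h1 h12
  have ha1 := exp_add_theta_pos (t := t) h1
  have ha2 := exp_add_theta_pos (t := t) h2
  have hb1 := theta_exp_pos (t := t) h1
  have hb2 := theta_exp_pos (t := t) h2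
  have hcc := hc (d := d) hd
  have harg : (Real.exp t + θ1)/(θ1*Real.exp t+1) ≤ (Real.exp t + θ2)/(θ2*Real.exp t+1) := by
    rw [div_le_div_iff₀ hb1 hb2]
    nlinarith [mul_nonneg (sub_nonneg.2 h12) (by nlinarith : (0:ℝ) ≤ 1 - Real.exp t^2)]
  have := Real.log_le_log (by positivity) harg
  rw [isingF, isingF]
  nlinarith

/-- Strict monotonicity of Δ in θ. -/
lemma Delta_strict_mono (hd : 3 ≤ d) {θ1 θ2 t1 t2 : ℝ} (h1 : 1 < θ1) (h12 : θ1 < θ2)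
    (hf1 : isingF d θ1 B t1 = t1) (hf2 : isingF d θ2 B t2 = t2) :
    phi d θ1 t1 < phi d θ2 t2 := by
  have h2 : 1 < θ2 := lt_trans h1 h12
  have hA2 := F_strictAnti (B := B) hd h2
  -- step (a): cosh t2 ≤ cosh t1
  have hcosh : Real.cosh t2 ≤ Real.cosh t1 := by
    rw [Real.cosh_le_cosh]
    rcases le_or_gt 0 B with hB | hB
    · obtain ⟨ha1, _⟩ := ts_sign_nonneg hd h1 hB hf1
      obtain ⟨ha2, _⟩ := ts_sign_nonneg hd h2 hB hf2
      rw [abs_of_nonneg ha1, abs_of_nonneg ha2]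
      by_contra h
      push_neg at h
      have hp : isingF d θ2 B t1 ≤ t1 := by
        calc isingF d θ2 B t1 ≤ isingF d θ1 B t1 := F_theta_mono_nonneg hd h1 (le_of_lt h12) ha1
        _ = t1 := hf1
      have := hA2 h
      rw [hf2] at this
      linarith [le_trans (le_of_lt this) hp]
    · obtain ⟨ha1, _⟩ := ts_sign_nonpos hd h1 (le_of_lt hB) hf1
      obtain ⟨ha2, _⟩ := ts_sign_nonpos hd h2 (le_of_lt hB) hf2
      rw [abs_of_nonpos ha1, abs_of_nonpos ha2]
      by_contra h
      push_neg at h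
      have h' : t2 < t1 := by linarith
      have hp : t1 ≤ isingF d θ2 B t1 := by
        calc t1 = isingF d θ1 B t1 := hf1.symm
        _ ≤ isingF d θ2 B t1 := F_theta_mono_nonpos hd h1 (le_of_lt h12) ha1
      have := hA2 h'
      rw [hf2] at this
      linarith
  -- step (b): phi d θ1 t1 < phi d θ2 t1
  have hb : phi d θ1 t1 < phi d θ2 t1 := by
    rw [phi, phi, div_lt_div_iff₀ (Dn_pos h1) (Dn_pos h2)]
    have hcc := hc (d := d) hd
    have hch : 1 ≤ Real.cosh t1 := Real.one_le_cosh t1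
    rw [Dn, Dn]
    have key : (θ2^2-1)*(θ1^2+1+2*θ1*Real.cosh t1) - (θ1^2-1)*(θ2^2+1+2*θ2*Real.cosh t1)
        = 2*(θ2^2-θ1^2) + 2*Real.cosh t1*((θ2-θ1)*(θ1*θ2+1)) := by ring
    have hpos : 0 < (θ2^2-1)*(θ1^2+1+2*θ1*Real.cosh t1) - (θ1^2-1)*(θ2^2+1+2*θ2*Real.cosh t1) := by
      rw [key]
      nlinarith [mul_pos (sub_pos.2 h12) (by nlinarith : (0:ℝ) < θ1*θ2+1),
        mul_pos (sub_pos.2 h12) (by nlinarith : (0:ℝ) < θ1+θ2)]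
    nlinarith [mul_pos (show (0:ℝ) < ((d:ℝ)-1) by linarith) hpos]
  -- step (c): phi d θ2 t1 ≤ phi d θ2 t2
  have hcterm : phi d θ2 t1 ≤ phi d θ2 t2 := by
    rw [phi, phi]
    have hn := num_pos (θ := θ2) hd h2
    have hd1 := Dn_pos (θ := θ2) (t := t1) h2
    have hd2 := Dn_pos (θ := θ2) (t := t2) h2
    apply div_le_div_of_nonneg_left (le_of_lt hn) hd2
    rw [Dn, Dn]; nlinarith
  linarith

end S15

namespace S15
variable {d : ℕ} {θ B t : ℝ}

lemma contAt_F_joint (hθ : 0 < θ) :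
    ContinuousAt (fun p : ℝ × ℝ => isingF d p.1 B p.2) (θ, t) := by
  have hden : (0:ℝ) < θ * Real.exp t + 1 := by positivity
  have hnum : (0:ℝ) < Real.exp t + θ := by positivity
  have h1 : ContinuousAt (fun p : ℝ × ℝ => (Real.exp p.2 + p.1)/(p.1*Real.exp p.2+1)) (θ, t) := by
    apply ContinuousAt.div
    · fun_prop
    · fun_prop
    · exact ne_of_gt hden
  have h2 := (h1.log (by positivity)).const_mul ((d:ℝ)-1)
  have h3 := h2.const_add (2*B)
  exact h3

lemma contAt_F_theta (hθ : 0 < θ) (a : ℝ) :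
    ContinuousAt (fun θ' => isingF d θ' B a) θ := by
  have h := (contAt_F_joint (d := d) (B := B) (θ := θ) (t := a) hθ)
  have hf : ContinuousAt (fun θ' : ℝ => (θ', a)) θ := continuousAt_id.prodMk continuousAt_const
  have h4 : ContinuousAt ((fun p : ℝ × ℝ => isingF d p.1 B p.2) ∘ (fun θ' : ℝ => (θ', a))) θ :=
    ContinuousAt.comp_of_eq (g := fun p : ℝ × ℝ => isingF d p.1 B p.2)
      (f := fun θ' : ℝ => (θ', a)) h hf rfl
  exact h4

lemma contAt_G_joint (hθ : 0 < θ) :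
    ContinuousAt (fun p : ℝ × ℝ => isingF d p.1 B (isingF d p.1 B p.2)) (θ, t) := by
  have h1 := contAt_F_joint (d := d) (B := B) (θ := θ) (t := t) hθ
  have h2 := contAt_F_joint (d := d) (B := B) (θ := θ) (t := isingF d θ B t) hθ
  have h4 : ContinuousAt ((fun p : ℝ × ℝ => isingF d p.1 B p.2) ∘
      (fun p : ℝ × ℝ => (p.1, isingF d p.1 B p.2))) (θ, t) :=
    ContinuousAt.comp_of_eq (g := fun p : ℝ × ℝ => isingF d p.1 B p.2)
      (f := fun p : ℝ × ℝ => (p.1, isingF d p.1 B p.2)) h2 (continuousAt_fst.prodMk h1) rfl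
  exact h4

lemma ts_continuousAt (hd : 3 ≤ d) {ts : ℝ → ℝ}
    (hts : ∀ θ : ℝ, 1 < θ → isingF d θ B (ts θ) = ts θ)
    (htsu : ∀ θ : ℝ, 1 < θ → ∀ s : ℝ, isingF d θ B s = s → s = ts θ)
    {θ0 : ℝ} (hθ0 : 1 < θ0) : ContinuousAt ts θ0 := by
  rw [ContinuousAt, Metric.tendsto_nhds]
  intro ε hε
  obtain ⟨a, ha⟩ : ∃ a, a = ts θ0 - ε/2 := ⟨_, rfl⟩
  obtain ⟨b, hb⟩ : ∃ b, b = ts θ0 + ε/2 := ⟨_, rfl⟩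
  have hA0 := F_strictAnti (B := B) hd hθ0
  have hFa : a < isingF d θ0 B a := by
    have := hA0 (show a < ts θ0 by rw [ha]; linarith)
    rw [hts θ0 hθ0] at this
    linarith
  have hFb : isingF d θ0 B b < b := by
    have := hA0 (show ts θ0 < b by rw [hb]; linarith)
    rw [hts θ0 hθ0] at this
    linarith
  have e1 : ∀ᶠ θ in 𝓝 θ0, a < isingF d θ B a :=
    (contAt_F_theta (by linarith) a).eventually_const_lt hFa
  have e2 : ∀ᶠ θ in 𝓝 θ0, isingF d θ B b < b :=
    (contAt_F_theta (by linarith) b).eventually_lt_const hFb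
  have e3 : ∀ᶠ θ in 𝓝 θ0, 1 < θ := eventually_gt_nhds hθ0
  filter_upwards [e1, e2, e3] with θ h1 h2 h3
  have hAθ := F_strictAnti (B := B) hd h3
  have hl : a < ts θ := by
    by_contra h
    push_neg at h
    have := hAθ.antitone h
    rw [hts θ h3] at this
    linarith
  have hr : ts θ < b := by
    by_contra h
    push_neg at h
    have := hAθ.antitone h
    rw [hts θ h3] at this
    linarith
  rw [Real.dist_eq, abs_lt]
  constructor <;> [skip; skip] <;> rw [ha] at hl <;> rw [hb] at hr <;> linarith

end S15

namespace S15
variable {d : ℕ} {θ B t : ℝ}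

/-- Subcritical uniqueness of fixed points of `G`. -/
lemma subcrit_unique (hd : 3 ≤ d) (hθ : 1 < θ) {tst : ℝ}
    (hfix : isingF d θ B tst = tst) (huniq : ∀ s, isingF d θ B s = s → s = tst)
    (hΔ : phi d θ tst ≤ 1) :
    ∀ t, isingF d θ B (isingF d θ B t) = t → t = tst := by
  intro t hGt
  by_cases hFt : isingF d θ B t = t
  · exact huniq t hFt
  · exfalso
    rcases lt_trichotomy t (isingF d θ B t) with h | h | h
    · exact no_two_cycle hd hθ hfix hΔ h rfl hGt
    · exact hFt h.symm
    · exact no_two_cycle hd hθ hfix hΔ h hGt rfl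

lemma exists_G_lt_left (hd : 3 ≤ d) (hθ : 1 < θ) {tst : ℝ}
    (hfix : isingF d θ B tst = tst) (hΔ : 1 < phi d θ tst) {t : ℝ} (ht : t < tst) :
    ∃ x, t < x ∧ x < tst ∧ isingF d θ B (isingF d θ B x) < x := by
  set G := fun t => isingF d θ B (isingF d θ B t) with hGdef
  have hGfix : G tst = tst := G_fix_ts hfix
  have hG := hasDerivAt_G (B := B) (t := tst) hd hθ
  rw [hfix] at hG
  have hphi := phi_pos (t := tst) hd hθ
  have hgt1 : (1:ℝ) < phi d θ tst * phi d θ tst := by nlinarith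
  have hs : Tendsto (slope G tst) (𝓝[≠] tst) (𝓝 (phi d θ tst * phi d θ tst)) :=
    hasDerivAt_iff_tendsto_slope.1 hG
  have hev : ∀ᶠ z in 𝓝[≠] tst, 1 < slope G tst z := hs.eventually_const_lt hgt1
  have h2 : ∀ᶠ z in 𝓝[<] tst, 1 < slope G tst z :=
    hev.filter_mono (nhdsWithin_mono tst (fun x hx => ne_of_lt hx))
  have h3 : ∀ᶠ z in 𝓝[<] tst, t < z :=
    eventually_mem_set.2 (mem_nhdsWithin_of_mem_nhds (Ioi_mem_nhds ht))
  have h4 : ∀ᶠ z in 𝓝[<] tst, z < tst := eventually_mem_set.2 self_mem_nhdsWithin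
  obtain ⟨x, hx1, hx2, hx3⟩ := (h2.and (h3.and h4)).exists
  refine ⟨x, hx2, hx3, ?_⟩
  rw [slope_def_field, hGfix] at hx1
  have h5 : x - tst < 0 := by linarith
  rw [lt_div_iff_of_neg h5] at hx1
  linarith

lemma exists_G_gt_right (hd : 3 ≤ d) (hθ : 1 < θ) {tst : ℝ}
    (hfix : isingF d θ B tst = tst) (hΔ : 1 < phi d θ tst) {t : ℝ} (ht : tst < t) :
    ∃ x, tst < x ∧ x < t ∧ x < isingF d θ B (isingF d θ B x) := by
  set G := fun t => isingF d θ B (isingF d θ B t) with hGdef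
  have hGfix : G tst = tst := G_fix_ts hfix
  have hG := hasDerivAt_G (B := B) (t := tst) hd hθ
  rw [hfix] at hG
  have hphi := phi_pos (t := tst) hd hθ
  have hgt1 : (1:ℝ) < phi d θ tst * phi d θ tst := by nlinarith
  have hs : Tendsto (slope G tst) (𝓝[≠] tst) (𝓝 (phi d θ tst * phi d θ tst)) :=
    hasDerivAt_iff_tendsto_slope.1 hG
  have hev : ∀ᶠ z in 𝓝[≠] tst, 1 < slope G tst z := hs.eventually_const_lt hgt1
  have h2 : ∀ᶠ z in 𝓝[>] tst, 1 < slope G tst z :=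
    hev.filter_mono (nhdsWithin_mono tst (fun x hx => ne_of_gt hx))
  have h3 : ∀ᶠ z in 𝓝[>] tst, z < t :=
    eventually_mem_set.2 (mem_nhdsWithin_of_mem_nhds (Iio_mem_nhds ht))
  have h4 : ∀ᶠ z in 𝓝[>] tst, tst < z := eventually_mem_set.2 self_mem_nhdsWithin
  obtain ⟨x, hx1, hx2, hx3⟩ := (h2.and (h3.and h4)).exists
  refine ⟨x, hx3, hx2, ?_⟩
  rw [slope_def_field, hGfix] at hx1
  have h5 : 0 < x - tst := by linarith
  have := (one_lt_div h5).1 hx1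
  linarith

/-- If there is no fixed point of `G` at or below `t`, then `G t > t`. -/
lemma no_fix_below (hd : 3 ≤ d) (hθ : 1 < θ) {t : ℝ}
    (h : ∀ z, isingF d θ B (isingF d θ B z) = z → t < z) :
    t < isingF d θ B (isingF d θ B t) := by
  set G := fun t => isingF d θ B (isingF d θ B t) with hGdef
  by_contra hcon
  push_neg at hcon
  have hne : G t ≠ t := fun he => lt_irrefl t (h t he)
  have hlt : G t < t := lt_of_le_of_ne hcon hne
  set T0 := min (t-1) (2*B - ((d:ℝ)-1)*Real.log θ) with hT0
  have hT0t : T0 < t := lt_of_le_of_lt (min_le_left _ _) (by linarith)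
  have hGT0 : T0 < G T0 := lt_of_le_of_lt (min_le_right _ _) (F_gt hd hθ)
  have h0 : (0:ℝ) ∈ Icc (G t - t) (G T0 - T0) := ⟨by linarith, by linarith⟩
  obtain ⟨z, hz1, hz2⟩ := intermediate_value_Icc' (le_of_lt hT0t)
    ((G_cont hd hθ).sub continuous_id).continuousOn h0
  simp only [Pi.sub_apply, id_eq] at hz2
  have hzfix : G z = z := by linarith [hz2]
  exact absurd (h z hzfix) (not_lt.2 hz1.2)

lemma no_fix_above (hd : 3 ≤ d) (hθ : 1 < θ) {t : ℝ}
    (h : ∀ z, isingF d θ B (isingF d θ B z) = z → z < t) :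
    isingF d θ B (isingF d θ B t) < t := by
  set G := fun t => isingF d θ B (isingF d θ B t) with hGdef
  by_contra hcon
  push_neg at hcon
  have hne : G t ≠ t := fun he => lt_irrefl t (h t he)
  have hlt : t < G t := lt_of_le_of_ne hcon (Ne.symm hne)
  set M := max (t+1) (2*B + ((d:ℝ)-1)*Real.log θ) with hM
  have htM : t < M := lt_of_lt_of_le (by linarith) (le_max_left _ _)
  have hGM : G M < M := lt_of_lt_of_le (F_lt hd hθ) (le_max_right _ _)
  have h0 : (0:ℝ) ∈ Icc (G M - M) (G t - t) := ⟨by linarith, by linarith⟩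
  obtain ⟨z, hz1, hz2⟩ := intermediate_value_Icc' (le_of_lt htM)
    ((G_cont hd hθ).sub continuous_id).continuousOn h0
  simp only [Pi.sub_apply, id_eq] at hz2
  have hzfix : G z = z := by linarith [hz2]
  exact absurd (h z hzfix) (not_lt.2 hz1.1)

end S15

namespace S15
variable {d : ℕ} {θ B t : ℝ}

lemma E_mem_bounds (hd : 3 ≤ d) (hθ : 1 < θ) {t : ℝ}
    (ht : isingF d θ B (isingF d θ B t) = t) :
    2*B - ((d:ℝ)-1)*Real.log θ < t ∧ t < 2*B + ((d:ℝ)-1)*Real.log θ := by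
  constructor
  · calc 2*B - ((d:ℝ)-1)*Real.log θ < isingF d θ B (isingF d θ B t) := F_gt hd hθ
    _ = t := ht
  · calc t = isingF d θ B (isingF d θ B t) := ht.symm
    _ < 2*B + ((d:ℝ)-1)*Real.log θ := F_lt hd hθ

lemma E_closed (hd : 3 ≤ d) (hθ : 1 < θ) :
    IsClosed {t : ℝ | isingF d θ B (isingF d θ B t) = t} :=
  isClosed_eq (G_cont hd hθ) continuous_id

lemma E_bddBelow (hd : 3 ≤ d) (hθ : 1 < θ) :
    BddBelow {t : ℝ | isingF d θ B (isingF d θ B t) = t} :=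
  ⟨2*B - ((d:ℝ)-1)*Real.log θ, fun t ht => le_of_lt (E_mem_bounds hd hθ ht).1⟩

lemma E_bddAbove (hd : 3 ≤ d) (hθ : 1 < θ) :
    BddAbove {t : ℝ | isingF d θ B (isingF d θ B t) = t} :=
  ⟨2*B + ((d:ℝ)-1)*Real.log θ, fun t ht => le_of_lt (E_mem_bounds hd hθ ht).2⟩

lemma supercrit (hd : 3 ≤ d) (hθ : 1 < θ) {tst : ℝ}
    (hfix : isingF d θ B tst = tst) (hΔ : 1 < phi d θ tst) :
    sInf {t : ℝ | isingF d θ B (isingF d θ B t) = t} < tst ∧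
    tst < sSup {t : ℝ | isingF d θ B (isingF d θ B t) = t} ∧
    isingF d θ B (isingF d θ B (sInf {t : ℝ | isingF d θ B (isingF d θ B t) = t}))
      = sInf {t : ℝ | isingF d θ B (isingF d θ B t) = t} ∧
    isingF d θ B (isingF d θ B (sSup {t : ℝ | isingF d θ B (isingF d θ B t) = t}))
      = sSup {t : ℝ | isingF d θ B (isingF d θ B t) = t} ∧
    isingF d θ B (sSup {t : ℝ | isingF d θ B (isingF d θ B t) = t})
      = sInf {t : ℝ | isingF d θ B (isingF d θ B t) = t} ∧
    isingF d θ B (sInf {t : ℝ | isingF d θ B (isingF d θ B t) = t})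
      = sSup {t : ℝ | isingF d θ B (isingF d θ B t) = t} ∧
    (∀ t : ℝ, isingF d θ B (isingF d θ B t) = t →
      t = sInf {t : ℝ | isingF d θ B (isingF d θ B t) = t} ∨ t = tst ∨
      t = sSup {t : ℝ | isingF d θ B (isingF d θ B t) = t}) := by
  set E := {t : ℝ | isingF d θ B (isingF d θ B t) = t} with hE
  have hEne : E.Nonempty := ⟨tst, G_fix_ts hfix⟩
  have hcl := E_closed (B := B) hd hθ
  have hbb := E_bddBelow (B := B) hd hθ
  have hba := E_bddAbove (B := B) hd hθ
  have hmE : sInf E ∈ E := hcl.csInf_mem hEne hbb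
  have hpE : sSup E ∈ E := hcl.csSup_mem hEne hba
  obtain ⟨p', q', hp'1, hq'1, hp'2, hq'2⟩ := exists_G_cross hd hθ hfix hΔ
  have hm_lt : sInf E < tst := lt_of_le_of_lt (csInf_le hbb hp'2) hp'1
  have hp_gt : tst < sSup E := lt_of_lt_of_le hq'1 (le_csSup hba hq'2)
  have hm := hmE
  have hp := hpE
  rw [hE, mem_setOf_eq] at hm hp
  have hA := F_strictAnti (B := B) hd hθ
  -- F (sInf E) ∈ E
  have hFmE : isingF d θ B (sInf E) ∈ E := by
    rw [hE, mem_setOf_eq, hm]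
  have hFpE : isingF d θ B (sSup E) ∈ E := by
    rw [hE, mem_setOf_eq, hp]
  have hFm_le : isingF d θ B (sInf E) ≤ sSup E := le_csSup hba hFmE
  have hm_le_Fp : sInf E ≤ isingF d θ B (sSup E) := csInf_le hbb hFpE
  have h1 : sSup E ≤ isingF d θ B (sInf E) := by
    have := hA.antitone hm_le_Fp
    rw [hp] at this
    exact this
  have hFm : isingF d θ B (sInf E) = sSup E := le_antisymm hFm_le h1
  have hFp : isingF d θ B (sSup E) = sInf E := by
    rw [← hFm, hm]
  refine ⟨hm_lt, hp_gt, hm, hp, hFp, hFm, ?_⟩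
  intro t ht
  have htE : t ∈ E := ht
  have h2 : sInf E ≤ t := csInf_le hbb htE
  have h3 : t ≤ sSup E := le_csSup hba htE
  by_contra hcon
  push_neg at hcon
  obtain ⟨hne1, hne2, hne3⟩ := hcon
  have h4 : sInf E < t := lt_of_le_of_ne h2 (Ne.symm hne1)
  have h5 : t < sSup E := lt_of_le_of_ne h3 hne3
  rcases lt_trichotomy t tst with h6 | h6 | h6
  · exact G_at_most_three hd hθ h4 h6 hp_gt hmE ht (G_fix_ts hfix) hpE
  · exact hne2 h6
  · exact G_at_most_three hd hθ hm_lt h6 h5 hmE (G_fix_ts hfix) ht hpE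

end S15

namespace S15
variable {d : ℕ} {θ B t : ℝ}

lemma small_phi (hd : 3 ≤ d) (hθ : 1 < θ) (h : ((d:ℝ)-1)*(θ-1) ≤ θ+1) :
    phi d θ t ≤ 1 := by
  rw [phi, div_le_one (Dn_pos hθ)]
  have hch : 1 ≤ Real.cosh t := Real.one_le_cosh t
  have hcc := hc (d := d) hd
  rw [Dn]
  nlinarith [mul_le_mul_of_nonneg_right h (by linarith : (0:ℝ) ≤ θ+1),
    mul_nonneg (by linarith : (0:ℝ) ≤ 2*θ) (by linarith : (0:ℝ) ≤ Real.cosh t - 1)]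

lemma Delta_contAt (hd : 3 ≤ d) {ts : ℝ → ℝ}
    (hts : ∀ θ : ℝ, 1 < θ → isingF d θ B (ts θ) = ts θ)
    (htsu : ∀ θ : ℝ, 1 < θ → ∀ s : ℝ, isingF d θ B s = s → s = ts θ)
    {θ0 : ℝ} (hθ0 : 1 < θ0) : ContinuousAt (fun θ => phi d θ (ts θ)) θ0 := by
  have h1 : ContinuousAt ts θ0 := ts_continuousAt hd hts htsu hθ0
  have hcosh : ContinuousAt (fun θ => Real.cosh (ts θ)) θ0 :=
    Real.continuous_cosh.continuousAt.comp h1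
  have hD : ContinuousAt (fun θ => θ^2 + 1 + 2*θ*Real.cosh (ts θ)) θ0 := by
    exact (((continuousAt_id.pow 2).add continuousAt_const).add
      ((continuousAt_const.mul continuousAt_id).mul hcosh))
  have hq : ContinuousAt (fun θ : ℝ => ((d:ℝ)-1)*(θ^2-1)) θ0 := by fun_prop
  have hne : Dn θ0 (ts θ0) ≠ 0 := (Dn_pos hθ0).ne'
  exact hq.div hD hne

lemma theta_c_exists (hd : 3 ≤ d) {ts : ℝ → ℝ}
    (hts : ∀ θ : ℝ, 1 < θ → isingF d θ B (ts θ) = ts θ)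
    (htsu : ∀ θ : ℝ, 1 < θ → ∀ s : ℝ, isingF d θ B s = s → s = ts θ) :
    ∃ θc : ℝ, 1 < θc ∧ (∀ θ, 1 < θ → θ ≤ θc → phi d θ (ts θ) ≤ 1) ∧
      (∀ θ, θc < θ → 1 < phi d θ (ts θ)) := by
  have hcc := hc (d := d) hd
  set S := {θ : ℝ | 1 < θ ∧ phi d θ (ts θ) ≤ 1} with hS
  set tb := ((d:ℝ)-1)/((d:ℝ)-2) with htb
  have htb1 : 1 < tb := by
    rw [htb, lt_div_iff₀ (by linarith : (0:ℝ) < (d:ℝ)-2)]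
    linarith
  have htbS : tb ∈ S := by
    refine ⟨htb1, small_phi hd htb1 ?_⟩
    have h2 : (0:ℝ) < (d:ℝ)-2 := by linarith
    rw [htb, div_sub_one h2.ne', div_add_one h2.ne', ← mul_div_assoc, div_le_div_iff₀ h2 h2]
    nlinarith
  have hbdd : BddAbove S := by
    refine ⟨2*Real.cosh (2*B) + 3, fun θ hθS => ?_⟩
    by_contra hcon
    push_neg at hcon
    obtain ⟨hθ1, hθle⟩ := hθS
    have hK : 1 ≤ Real.cosh (2*B) := Real.one_le_cosh (2*B)
    have hcosh : Real.cosh (ts θ) ≤ Real.cosh (2*B) := cosh_ts_le hd hθ1 (hts θ hθ1)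
    have : 1 < phi d θ (ts θ) := by
      rw [phi, lt_div_iff₀ (Dn_pos hθ1), one_mul, Dn]
      have e1 : 3 < θ - 2*Real.cosh (2*B) := by linarith
      have e2 : θ*3 < θ*(θ - 2*Real.cosh (2*B)) :=
        mul_lt_mul_of_pos_left e1 (by linarith)
      have e3 : 2*θ*Real.cosh (ts θ) ≤ 2*θ*Real.cosh (2*B) :=
        mul_le_mul_of_nonneg_left hcosh (by linarith)
      nlinarith [e2, e3, mul_nonneg (by linarith : (0:ℝ) ≤ (d:ℝ)-1-2)
        (by nlinarith : (0:ℝ) ≤ θ^2-1)]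
    linarith
  set θc := sSup S with hθc
  have htb_le : tb ≤ θc := le_csSup hbdd htbS
  have hθc1 : 1 < θc := lt_of_lt_of_le htb1 htb_le
  have hlt : ∀ θ, 1 < θ → θ < θc → phi d θ (ts θ) ≤ 1 := by
    intro θ hθ1 hθlt
    obtain ⟨s, hsS, hs_gt⟩ := exists_lt_of_lt_csSup ⟨tb, htbS⟩ hθlt
    have := Delta_strict_mono (B := B) hd hθ1 hs_gt (hts θ hθ1) (hts s hsS.1)
    linarith [hsS.2]
  have hθcle : phi d θc (ts θc) ≤ 1 := by
    by_contra hgt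
    push_neg at hgt
    have hev : ∀ᶠ θ in 𝓝 θc, 1 < phi d θ (ts θ) :=
      (Delta_contAt hd hts htsu hθc1).eventually_const_lt hgt
    have hev2 : ∀ᶠ θ in 𝓝[<] θc, 1 < phi d θ (ts θ) :=
      hev.filter_mono nhdsWithin_le_nhds
    have hev3 : ∀ᶠ θ in 𝓝[<] θc, 1 < θ :=
      eventually_mem_set.2 (mem_nhdsWithin_of_mem_nhds (Ioi_mem_nhds hθc1))
    have hev4 : ∀ᶠ θ in 𝓝[<] θc, θ < θc := eventually_mem_set.2 self_mem_nhdsWithin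
    obtain ⟨θ, h1, h2, h3⟩ := (hev2.and (hev3.and hev4)).exists
    linarith [hlt θ h2 h3]
  refine ⟨θc, hθc1, ?_, ?_⟩
  · intro θ h1 h2
    rcases lt_or_eq_of_le h2 with h | h
    · exact hlt θ h1 h
    · rw [h]; exact hθcle
  · intro θ hθgt
    by_contra hcon
    push_neg at hcon
    have hθ1 : 1 < θ := lt_trans hθc1 hθgt
    have : θ ∈ S := ⟨hθ1, hcon⟩
    linarith [le_csSup hbdd this]

end S15

namespace S15
variable {d : ℕ} {θ B t : ℝ}

lemma contAt_G_theta (hθ : 0 < θ) (a : ℝ) :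
    ContinuousAt (fun θ' => isingF d θ' B (isingF d θ' B a)) θ := by
  have h := contAt_G_joint (d := d) (B := B) (θ := θ) (t := a) hθ
  have hf : ContinuousAt (fun θ' : ℝ => (θ', a)) θ := continuousAt_id.prodMk continuousAt_const
  have h4 : ContinuousAt ((fun p : ℝ × ℝ => isingF d p.1 B (isingF d p.1 B p.2)) ∘
      (fun θ' : ℝ => (θ', a))) θ :=
    ContinuousAt.comp_of_eq (g := fun p : ℝ × ℝ => isingF d p.1 B (isingF d p.1 B p.2))
      (f := fun θ' : ℝ => (θ', a)) h hf rfl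
  exact h4

lemma tm_continuousAt (hd : 3 ≤ d) {ts : ℝ → ℝ}
    (hts : ∀ θ : ℝ, 1 < θ → isingF d θ B (ts θ) = ts θ)
    (htsu : ∀ θ : ℝ, 1 < θ → ∀ s : ℝ, isingF d θ B s = s → s = ts θ)
    {θc : ℝ} (hθc1 : 1 < θc) (hsup : ∀ θ, θc < θ → 1 < phi d θ (ts θ))
    {θ0 : ℝ} (hθ0 : θc < θ0) :
    ContinuousAt (fun θ => sInf {t : ℝ | isingF d θ B (isingF d θ B t) = t}) θ0 := by
  have hθ01 : 1 < θ0 := lt_trans hθc1 hθ0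
  obtain ⟨hm0, hp0, hfm0, hfp0, _, _, htri0⟩ :=
    supercrit (B := B) hd hθ01 (hts θ0 hθ01) (hsup θ0 hθ0)
  set m0 := sInf {t : ℝ | isingF d θ0 B (isingF d θ0 B t) = t} with hm0def
  rw [ContinuousAt, Metric.tendsto_nhds]
  intro ε hε
  obtain ⟨ε', hε'pos, hε'1, hε'2⟩ : ∃ ε', 0 < ε' ∧ ε' ≤ ε/2 ∧ ε' ≤ (ts θ0 - m0)/2 :=
    ⟨min (ε/2) ((ts θ0 - m0)/2), lt_min (by linarith) (by linarith),
      min_le_left _ _, min_le_right _ _⟩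
  obtain ⟨a, ha⟩ : ∃ a, a = m0 - ε' := ⟨_, rfl⟩
  obtain ⟨b, hb⟩ : ∃ b, b = m0 + ε' := ⟨_, rfl⟩
  have hGa : a < isingF d θ0 B (isingF d θ0 B a) := by
    apply no_fix_below hd hθ01
    intro z hz
    have := csInf_le (E_bddBelow (B := B) hd hθ01) hz
    rw [← hm0def] at this
    linarith
  have hb_lt : b < ts θ0 := by rw [hb]; linarith
  have hb_gt : m0 < b := by rw [hb]; linarith
  have hGb : isingF d θ0 B (isingF d θ0 B b) < b := by
    by_contra hcon
    push_neg at hcon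
    have hbne : isingF d θ0 B (isingF d θ0 B b) ≠ b := by
      intro he
      rcases htri0 b he with h | h | h
      · linarith [h ▸ hb_gt]
      · linarith
      · rw [h] at hb_lt; linarith
    have hbgt : b < isingF d θ0 B (isingF d θ0 B b) := lt_of_le_of_ne hcon (Ne.symm hbne)
    obtain ⟨x, hx1, hx2, hx3⟩ := exists_G_lt_left hd hθ01 (hts θ0 hθ01) (hsup θ0 hθ0) hb_lt
    have h0 : (0:ℝ) ∈ Icc (isingF d θ0 B (isingF d θ0 B x) - x)
        (isingF d θ0 B (isingF d θ0 B b) - b) := ⟨by linarith, by linarith⟩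
    obtain ⟨z, hz1, hz2⟩ := intermediate_value_Icc' (le_of_lt hx1)
      ((G_cont hd hθ01).sub continuous_id).continuousOn h0
    simp only [Pi.sub_apply, id_eq] at hz2
    have hzfix : isingF d θ0 B (isingF d θ0 B z) = z := by linarith [hz2]
    rcases htri0 z hzfix with h | h | h
    · rw [h] at hz1; linarith [hz1.1]
    · linarith [hz1.2, h]
    · have := hz1.2
      rw [h] at this
      linarith
  have ev1 : ∀ᶠ θ in 𝓝 θ0, θc < θ := eventually_gt_nhds hθ0
  have ev2 : ∀ᶠ θ in 𝓝 θ0, a < isingF d θ B (isingF d θ B a) :=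
    (contAt_G_theta (by linarith) a).eventually_const_lt hGa
  have ev3 : ∀ᶠ θ in 𝓝 θ0, isingF d θ B (isingF d θ B b) < b :=
    (contAt_G_theta (by linarith) b).eventually_lt_const hGb
  have ev4 : ∀ᶠ θ in 𝓝 θ0, b < ts θ :=
    (ts_continuousAt hd hts htsu hθ01).eventually_const_lt hb_lt
  filter_upwards [ev1, ev2, ev3, ev4] with θ h1 h2 h3 h4
  have hθ1 : 1 < θ := lt_trans hθc1 h1
  obtain ⟨hm, hp, hfm, hfp, _, _, htri⟩ :=
    supercrit (B := B) hd hθ1 (hts θ hθ1) (hsup θ h1)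
  have hab : a < b := by rw [ha, hb]; linarith
  have h0 : (0:ℝ) ∈ Icc (isingF d θ B (isingF d θ B b) - b)
      (isingF d θ B (isingF d θ B a) - a) := ⟨by linarith, by linarith⟩
  obtain ⟨z, hz1, hz2⟩ := intermediate_value_Icc' (le_of_lt hab)
    ((G_cont hd hθ1).sub continuous_id).continuousOn h0
  simp only [Pi.sub_apply, id_eq] at hz2
  have hzfix : isingF d θ B (isingF d θ B z) = z := by linarith [hz2]
  have hzm : z = sInf {t : ℝ | isingF d θ B (isingF d θ B t) = t} := by
    rcases htri z hzfix with h | h | h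
    · exact h
    · exfalso; rw [h] at hz1; linarith [hz1.2]
    · exfalso
      have := hz1.2
      rw [h] at this
      linarith
  rw [Real.dist_eq, abs_lt, ← hzm]
  constructor
  · have := hz1.1; rw [ha] at this; linarith
  · have := hz1.2; rw [hb] at this; linarith

end S15

namespace S15
variable {d : ℕ} {θ B t : ℝ}

lemma tp_continuousAt (hd : 3 ≤ d) {ts : ℝ → ℝ}
    (hts : ∀ θ : ℝ, 1 < θ → isingF d θ B (ts θ) = ts θ)
    (htsu : ∀ θ : ℝ, 1 < θ → ∀ s : ℝ, isingF d θ B s = s → s = ts θ)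
    {θc : ℝ} (hθc1 : 1 < θc) (hsup : ∀ θ, θc < θ → 1 < phi d θ (ts θ))
    {θ0 : ℝ} (hθ0 : θc < θ0) :
    ContinuousAt (fun θ => sSup {t : ℝ | isingF d θ B (isingF d θ B t) = t}) θ0 := by
  have hθ01 : 1 < θ0 := lt_trans hθc1 hθ0
  obtain ⟨hm0, hp0, hfm0, hfp0, _, _, htri0⟩ :=
    supercrit (B := B) hd hθ01 (hts θ0 hθ01) (hsup θ0 hθ0)
  set p0 := sSup {t : ℝ | isingF d θ0 B (isingF d θ0 B t) = t} with hp0def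
  rw [ContinuousAt, Metric.tendsto_nhds]
  intro ε hε
  obtain ⟨ε', hε'pos, hε'1, hε'2⟩ : ∃ ε', 0 < ε' ∧ ε' ≤ ε/2 ∧ ε' ≤ (p0 - ts θ0)/2 :=
    ⟨min (ε/2) ((p0 - ts θ0)/2), lt_min (by linarith) (by linarith),
      min_le_left _ _, min_le_right _ _⟩
  obtain ⟨a, ha⟩ : ∃ a, a = p0 - ε' := ⟨_, rfl⟩
  obtain ⟨b, hb⟩ : ∃ b, b = p0 + ε' := ⟨_, rfl⟩
  have hGb : isingF d θ0 B (isingF d θ0 B b) < b := by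
    apply no_fix_above hd hθ01
    intro z hz
    have := le_csSup (E_bddAbove (B := B) hd hθ01) hz
    rw [← hp0def] at this
    linarith [hb]
  have ha_gt : ts θ0 < a := by rw [ha]; linarith
  have ha_lt : a < p0 := by rw [ha]; linarith
  have hGa : a < isingF d θ0 B (isingF d θ0 B a) := by
    by_contra hcon
    push_neg at hcon
    have hane : isingF d θ0 B (isingF d θ0 B a) ≠ a := by
      intro he
      rcases htri0 a he with h | h | h
      · rw [h] at ha_gt; linarith
      · linarith
      · linarith [h ▸ ha_lt]
    have halt : isingF d θ0 B (isingF d θ0 B a) < a := lt_of_le_of_ne hcon hane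
    obtain ⟨x, hx1, hx2, hx3⟩ := exists_G_gt_right hd hθ01 (hts θ0 hθ01) (hsup θ0 hθ0) ha_gt
    have h0 : (0:ℝ) ∈ Icc (isingF d θ0 B (isingF d θ0 B a) - a)
        (isingF d θ0 B (isingF d θ0 B x) - x) := ⟨by linarith, by linarith⟩
    obtain ⟨z, hz1, hz2⟩ := intermediate_value_Icc' (le_of_lt hx2)
      ((G_cont hd hθ01).sub continuous_id).continuousOn h0
    simp only [Pi.sub_apply, id_eq] at hz2
    have hzfix : isingF d θ0 B (isingF d θ0 B z) = z := by linarith [hz2]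
    rcases htri0 z hzfix with h | h | h
    · rw [h] at hz1; linarith [hz1.1]
    · rw [h] at hz1; linarith [hz1.1]
    · rw [h] at hz1; linarith [hz1.2]
  have ev1 : ∀ᶠ θ in 𝓝 θ0, θc < θ := eventually_gt_nhds hθ0
  have ev2 : ∀ᶠ θ in 𝓝 θ0, a < isingF d θ B (isingF d θ B a) :=
    (contAt_G_theta (by linarith) a).eventually_const_lt hGa
  have ev3 : ∀ᶠ θ in 𝓝 θ0, isingF d θ B (isingF d θ B b) < b :=
    (contAt_G_theta (by linarith) b).eventually_lt_const hGb
  have ev4 : ∀ᶠ θ in 𝓝 θ0, ts θ < a :=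
    (ts_continuousAt hd hts htsu hθ01).eventually_lt_const ha_gt
  filter_upwards [ev1, ev2, ev3, ev4] with θ h1 h2 h3 h4
  have hθ1 : 1 < θ := lt_trans hθc1 h1
  obtain ⟨hm, hp, hfm, hfp, _, _, htri⟩ :=
    supercrit (B := B) hd hθ1 (hts θ hθ1) (hsup θ h1)
  have hab : a < b := by rw [ha, hb]; linarith
  have h0 : (0:ℝ) ∈ Icc (isingF d θ B (isingF d θ B b) - b)
      (isingF d θ B (isingF d θ B a) - a) := ⟨by linarith, by linarith⟩
  obtain ⟨z, hz1, hz2⟩ := intermediate_value_Icc' (le_of_lt hab)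
    ((G_cont hd hθ1).sub continuous_id).continuousOn h0
  simp only [Pi.sub_apply, id_eq] at hz2
  have hzfix : isingF d θ B (isingF d θ B z) = z := by linarith [hz2]
  have hzp : z = sSup {t : ℝ | isingF d θ B (isingF d θ B t) = t} := by
    rcases htri z hzfix with h | h | h
    · exfalso; rw [h] at hz1; linarith [hz1.1, hm, h4]
    · exfalso; rw [h] at hz1; linarith [hz1.1]
    · exact h
  rw [Real.dist_eq, abs_lt, ← hzp]
  constructor
  · have := hz1.1; rw [ha] at this; linarith
  · have := hz1.2; rw [hb] at this; linarith

end S15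

namespace S15
variable {d : ℕ} {θ B t : ℝ}

lemma tm_tendsto (hd : 3 ≤ d) {ts : ℝ → ℝ}
    (hts : ∀ θ : ℝ, 1 < θ → isingF d θ B (ts θ) = ts θ)
    (htsu : ∀ θ : ℝ, 1 < θ → ∀ s : ℝ, isingF d θ B s = s → s = ts θ)
    {θc : ℝ} (hθc1 : 1 < θc) (hsubc : phi d θc (ts θc) ≤ 1)
    (hsup : ∀ θ, θc < θ → 1 < phi d θ (ts θ)) :
    Tendsto (fun θ => sInf {t : ℝ | isingF d θ B (isingF d θ B t) = t})
      (𝓝[>] θc) (𝓝 (ts θc)) := by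
  have huniqc : ∀ t, isingF d θc B (isingF d θc B t) = t → t = ts θc :=
    subcrit_unique hd hθc1 (hts θc hθc1) (htsu θc hθc1) hsubc
  rw [Metric.tendsto_nhds]
  intro ε hε
  obtain ⟨z, hzdef⟩ : ∃ z, z = ts θc := ⟨_, rfl⟩
  obtain ⟨L, hLdef⟩ : ∃ L, L = 2*B - ((d:ℝ)-1)*Real.log (θc+1) - 1 := ⟨_, rfl⟩
  have hcc := hc (d := d) hd
  have hlog : Real.log θc < Real.log (θc+1) :=
    Real.log_lt_log (by linarith) (by linarith)
  have hLz : L < z := by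
    have h1 : 2*B - ((d:ℝ)-1)*Real.log θc < z := by
      rw [hzdef, ← hts θc hθc1]
      exact F_gt hd hθc1
    have h2 : ((d:ℝ)-1)*Real.log θc ≤ ((d:ℝ)-1)*Real.log (θc+1) :=
      mul_le_mul_of_nonneg_left (le_of_lt hlog) (by linarith)
    rw [hLdef]; linarith
  obtain ⟨M, hMdef⟩ : ∃ M, M = max L (z - ε) := ⟨_, rfl⟩
  have hMz : M < z := by rw [hMdef]; exact max_lt hLz (by linarith)
  have hCpos : ∀ t' ∈ Icc L M, 0 < isingF d θc B (isingF d θc B t') - t' := by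
    intro t' ht'
    have ht'z : t' < z := lt_of_le_of_lt ht'.2 hMz
    have := no_fix_below hd hθc1 (t := t') (fun w hw => by
      rw [huniqc w hw, ← hzdef]; exact ht'z)
    linarith
  -- tube via thickening
  obtain ⟨V, hVdef⟩ : ∃ V, V = {p : ℝ × ℝ | 1 < p.1} := ⟨_, rfl⟩
  have hVopen : IsOpen V := by
    rw [hVdef]; exact isOpen_lt continuous_const continuous_fst
  obtain ⟨H, hHdef⟩ : ∃ H : ℝ × ℝ → ℝ,
      H = fun p => isingF d p.1 B (isingF d p.1 B p.2) - p.2 := ⟨_, rfl⟩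
  have hHcont : ContinuousOn H V := by
    intro p hp
    rw [hVdef, mem_setOf_eq] at hp
    rw [hHdef]
    exact ((contAt_G_joint (lt_trans zero_lt_one hp)).sub continuousAt_snd).continuousWithinAt
  have hUopen : IsOpen (V ∩ H ⁻¹' (Ioi 0)) :=
    hHcont.isOpen_inter_preimage hVopen isOpen_Ioi
  have hK : IsCompact (({θc} : Set ℝ) ×ˢ (Icc L M)) := isCompact_singleton.prod isCompact_Icc
  have hKU : (({θc} : Set ℝ) ×ˢ (Icc L M)) ⊆ V ∩ H ⁻¹' (Ioi 0) := by
    rintro ⟨θ', t'⟩ hp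
    rw [mem_prod] at hp
    obtain ⟨hp1, hp2⟩ := hp
    rw [mem_singleton_iff] at hp1
    subst hp1
    constructor
    · rw [hVdef]; exact hθc1
    · rw [mem_preimage, hHdef, mem_Ioi]
      exact hCpos t' hp2
  obtain ⟨δ, hδpos, hδ⟩ := hK.exists_thickening_subset_open hUopen hKU
  have ev1 : ∀ᶠ θ in 𝓝[>] θc, dist θ θc < min δ 1 :=
    Filter.Eventually.filter_mono nhdsWithin_le_nhds
      (eventually_mem_set.2 (Metric.ball_mem_nhds θc (lt_min hδpos one_pos)))
  have ev2 : ∀ᶠ θ in 𝓝[>] θc, θc < θ := eventually_mem_set.2 self_mem_nhdsWithin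
  have ev3 : ∀ᶠ θ in 𝓝[>] θc, ts θ < z + ε := by
    apply Filter.Eventually.filter_mono nhdsWithin_le_nhds
    exact (ts_continuousAt hd hts htsu hθc1).eventually_lt_const (by rw [hzdef]; linarith)
  filter_upwards [ev1, ev2, ev3] with θ h1 h2 h3
  have hθ1 : 1 < θ := lt_trans hθc1 h2
  obtain ⟨hm, hp, hfm, hfp, _, _, htri⟩ :=
    supercrit (B := B) hd hθ1 (hts θ hθ1) (hsup θ h2)
  rw [Real.dist_eq, abs_lt]
  constructor
  · -- lower bound
    rw [← hzdef]
    by_contra hcon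
    push_neg at hcon
    obtain ⟨m, hm_eq⟩ : ∃ m, m = sInf {t : ℝ | isingF d θ B (isingF d θ B t) = t} := ⟨_, rfl⟩
    rw [← hm_eq] at hcon
    have hmfix : isingF d θ B (isingF d θ B m) = m := by rw [hm_eq]; exact hfm
    have hmle : m ≤ z - ε := by linarith
    have hmL : L < m := by
      have hb := (E_mem_bounds hd hθ1 hmfix).1
      have hθlt : θ < θc + 1 := by
        have := abs_lt.1 (by rw [← Real.dist_eq]; exact h1)
        have h5 : dist θ θc < 1 := lt_of_lt_of_le h1 (min_le_right _ _)
        rw [Real.dist_eq, abs_lt] at h5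
        linarith [h5.1, h5.2]
      have hlog2 : Real.log θ < Real.log (θc+1) :=
        Real.log_lt_log (by linarith) hθlt
      have h6 : ((d:ℝ)-1)*Real.log θ ≤ ((d:ℝ)-1)*Real.log (θc+1) :=
        mul_le_mul_of_nonneg_left (le_of_lt hlog2) (by linarith)
      rw [hLdef]; linarith
    have hmC : m ∈ Icc L M := ⟨le_of_lt hmL, by rw [hMdef]; exact le_max_of_le_right hmle⟩
    have hthick : (θ, m) ∈ Metric.thickening δ (({θc} : Set ℝ) ×ˢ (Icc L M)) := by
      rw [Metric.mem_thickening_iff]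
      refine ⟨(θc, m), ?_, ?_⟩
      · rw [mem_prod]; exact ⟨mem_singleton _, hmC⟩
      · rw [Prod.dist_eq, dist_self]
        simp only [max_eq_left dist_nonneg]
        exact lt_of_lt_of_le h1 (min_le_left _ _)
    have := hδ hthick
    obtain ⟨_, hH⟩ := this
    rw [mem_preimage, hHdef, mem_Ioi] at hH
    simp only at hH
    rw [hmfix] at hH
    linarith
  · -- upper bound
    calc sInf {t : ℝ | isingF d θ B (isingF d θ B t) = t} - ts θc < ts θ - ts θc := by linarith
    _ < z + ε - ts θc := by linarith
    _ = ε := by rw [hzdef]; ring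

end S15

namespace S15
variable {d : ℕ} {θ B t : ℝ}

lemma tp_tendsto (hd : 3 ≤ d) {ts : ℝ → ℝ}
    (hts : ∀ θ : ℝ, 1 < θ → isingF d θ B (ts θ) = ts θ)
    (htsu : ∀ θ : ℝ, 1 < θ → ∀ s : ℝ, isingF d θ B s = s → s = ts θ)
    {θc : ℝ} (hθc1 : 1 < θc) (hsubc : phi d θc (ts θc) ≤ 1)
    (hsup : ∀ θ, θc < θ → 1 < phi d θ (ts θ)) :
    Tendsto (fun θ => sSup {t : ℝ | isingF d θ B (isingF d θ B t) = t})
      (𝓝[>] θc) (𝓝 (ts θc)) := by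
  have huniqc : ∀ t, isingF d θc B (isingF d θc B t) = t → t = ts θc :=
    subcrit_unique hd hθc1 (hts θc hθc1) (htsu θc hθc1) hsubc
  rw [Metric.tendsto_nhds]
  intro ε hε
  obtain ⟨z, hzdef⟩ : ∃ z, z = ts θc := ⟨_, rfl⟩
  obtain ⟨R, hRdef⟩ : ∃ R, R = 2*B + ((d:ℝ)-1)*Real.log (θc+1) + 1 := ⟨_, rfl⟩
  have hcc := hc (d := d) hd
  have hlog : Real.log θc < Real.log (θc+1) :=
    Real.log_lt_log (by linarith) (by linarith)
  have hzR : z < R := by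
    have h1 : z < 2*B + ((d:ℝ)-1)*Real.log θc := by
      rw [hzdef, ← hts θc hθc1]
      exact F_lt hd hθc1
    have h2 : ((d:ℝ)-1)*Real.log θc ≤ ((d:ℝ)-1)*Real.log (θc+1) :=
      mul_le_mul_of_nonneg_left (le_of_lt hlog) (by linarith)
    rw [hRdef]; linarith
  obtain ⟨M, hMdef⟩ : ∃ M, M = min R (z + ε) := ⟨_, rfl⟩
  have hMz : z < M := by rw [hMdef]; exact lt_min hzR (by linarith)
  have hCneg : ∀ t' ∈ Icc M R, isingF d θc B (isingF d θc B t') - t' < 0 := by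
    intro t' ht'
    have ht'z : z < t' := lt_of_lt_of_le hMz ht'.1
    have := no_fix_above hd hθc1 (t := t') (fun w hw => by
      rw [huniqc w hw, ← hzdef]; exact ht'z)
    linarith
  obtain ⟨V, hVdef⟩ : ∃ V, V = {p : ℝ × ℝ | 1 < p.1} := ⟨_, rfl⟩
  have hVopen : IsOpen V := by
    rw [hVdef]; exact isOpen_lt continuous_const continuous_fst
  obtain ⟨H, hHdef⟩ : ∃ H : ℝ × ℝ → ℝ,
      H = fun p => isingF d p.1 B (isingF d p.1 B p.2) - p.2 := ⟨_, rfl⟩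
  have hHcont : ContinuousOn H V := by
    intro p hp
    rw [hVdef, mem_setOf_eq] at hp
    rw [hHdef]
    exact ((contAt_G_joint (lt_trans zero_lt_one hp)).sub continuousAt_snd).continuousWithinAt
  have hUopen : IsOpen (V ∩ H ⁻¹' (Iio 0)) :=
    hHcont.isOpen_inter_preimage hVopen isOpen_Iio
  have hK : IsCompact (({θc} : Set ℝ) ×ˢ (Icc M R)) := isCompact_singleton.prod isCompact_Icc
  have hKU : (({θc} : Set ℝ) ×ˢ (Icc M R)) ⊆ V ∩ H ⁻¹' (Iio 0) := by
    rintro ⟨θ', t'⟩ hp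
    rw [mem_prod] at hp
    obtain ⟨hp1, hp2⟩ := hp
    rw [mem_singleton_iff] at hp1
    subst hp1
    constructor
    · rw [hVdef]; exact hθc1
    · rw [mem_preimage, hHdef, mem_Iio]
      exact hCneg t' hp2
  obtain ⟨δ, hδpos, hδ⟩ := hK.exists_thickening_subset_open hUopen hKU
  have ev1 : ∀ᶠ θ in 𝓝[>] θc, dist θ θc < min δ 1 :=
    Filter.Eventually.filter_mono nhdsWithin_le_nhds
      (eventually_mem_set.2 (Metric.ball_mem_nhds θc (lt_min hδpos one_pos)))
  have ev2 : ∀ᶠ θ in 𝓝[>] θc, θc < θ := eventually_mem_set.2 self_mem_nhdsWithin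
  have ev3 : ∀ᶠ θ in 𝓝[>] θc, z - ε < ts θ := by
    apply Filter.Eventually.filter_mono nhdsWithin_le_nhds
    exact (ts_continuousAt hd hts htsu hθc1).eventually_const_lt (by rw [hzdef]; linarith)
  filter_upwards [ev1, ev2, ev3] with θ h1 h2 h3
  have hθ1 : 1 < θ := lt_trans hθc1 h2
  obtain ⟨hm, hp, hfm, hfp, _, _, htri⟩ :=
    supercrit (B := B) hd hθ1 (hts θ hθ1) (hsup θ h2)
  rw [Real.dist_eq, abs_lt]
  constructor
  · rw [← hzdef]; linarith
  · -- upper bound: sSup < z + ε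
    rw [← hzdef]
    by_contra hcon
    push_neg at hcon
    obtain ⟨p, hp_eq⟩ : ∃ p, p = sSup {t : ℝ | isingF d θ B (isingF d θ B t) = t} := ⟨_, rfl⟩
    rw [← hp_eq] at hcon
    have hpfix : isingF d θ B (isingF d θ B p) = p := by rw [hp_eq]; exact hfp
    have hpge : z + ε ≤ p := by linarith
    have hpR : p < R := by
      have hb := (E_mem_bounds hd hθ1 hpfix).2
      have hθlt : θ < θc + 1 := by
        have h5 : dist θ θc < 1 := lt_of_lt_of_le h1 (min_le_right _ _)
        rw [Real.dist_eq, abs_lt] at h5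
        linarith [h5.1, h5.2]
      have hlog2 : Real.log θ < Real.log (θc+1) :=
        Real.log_lt_log (by linarith) hθlt
      have h6 : ((d:ℝ)-1)*Real.log θ ≤ ((d:ℝ)-1)*Real.log (θc+1) :=
        mul_le_mul_of_nonneg_left (le_of_lt hlog2) (by linarith)
      rw [hRdef]; linarith
    have hpC : p ∈ Icc M R := ⟨by rw [hMdef]; exact le_trans (min_le_right _ _) hpge, le_of_lt hpR⟩
    have hthick : (θ, p) ∈ Metric.thickening δ (({θc} : Set ℝ) ×ˢ (Icc M R)) := by
      rw [Metric.mem_thickening_iff]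
      refine ⟨(θc, p), ?_, ?_⟩
      · rw [mem_prod]; exact ⟨mem_singleton _, hpC⟩
      · rw [Prod.dist_eq, dist_self]
        simp only [max_eq_left dist_nonneg]
        exact lt_of_lt_of_le h1 (min_le_left _ _)
    have := hδ hthick
    obtain ⟨_, hH⟩ := this
    rw [mem_preimage, hHdef, mem_Iio] at hH
    simp only at hH
    rw [hpfix] at hH
    linarith

end S15

theorem stmt15 (d : ℕ) (hd : 3 ≤ d) (B : ℝ) (ts : ℝ → ℝ)
    (hts : ∀ θ : ℝ, 1 < θ → isingF d θ B (ts θ) = ts θ)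
    (htsu : ∀ θ : ℝ, 1 < θ → ∀ s : ℝ, isingF d θ B s = s → s = ts θ) :
    ∃ θc : ℝ, 1 < θc ∧
      (∀ θ : ℝ, 1 < θ → θ ≤ θc →
        ∀ t : ℝ, isingF d θ B (isingF d θ B t) = t → t = ts θ) ∧
      ∃ tm tp : ℝ → ℝ,
        (∀ θ : ℝ, θc < θ →
          tm θ < ts θ ∧ ts θ < tp θ ∧
          isingF d θ B (isingF d θ B (tm θ)) = tm θ ∧
          isingF d θ B (isingF d θ B (tp θ)) = tp θ ∧
          isingF d θ B (tp θ) = tm θ ∧ isingF d θ B (tm θ) = tp θ ∧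
          (∀ t : ℝ, isingF d θ B (isingF d θ B t) = t →
            t = tm θ ∨ t = ts θ ∨ t = tp θ)) ∧
        ContinuousOn ts (Ioi 1) ∧
        ContinuousOn tm (Ioi θc) ∧
        ContinuousOn tp (Ioi θc) ∧
        Tendsto tm (nhdsWithin θc (Ioi θc)) (nhds (ts θc)) ∧
        Tendsto tp (nhdsWithin θc (Ioi θc)) (nhds (ts θc)) := by
  obtain ⟨θc, hθc1, hsub, hsup⟩ := S15.theta_c_exists (B := B) hd hts htsu
  refine ⟨θc, hθc1, ?_, ?_⟩
  · intro θ h1 h2 t ht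
    exact S15.subcrit_unique hd h1 (hts θ h1) (htsu θ h1) (hsub θ h1 h2) t ht
  · refine ⟨fun θ => sInf {t : ℝ | isingF d θ B (isingF d θ B t) = t},
      fun θ => sSup {t : ℝ | isingF d θ B (isingF d θ B t) = t}, ?_, ?_, ?_, ?_, ?_, ?_⟩
    · intro θ hθ
      have hθ1 : 1 < θ := lt_trans hθc1 hθ
      exact S15.supercrit (B := B) hd hθ1 (hts θ hθ1) (hsup θ hθ)
    · exact fun θ hθ => (S15.ts_continuousAt hd hts htsu hθ).continuousWithinAt
    · exact fun θ hθ => (S15.tm_continuousAt hd hts htsu hθc1 hsup hθ).continuousWithinAt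
    · exact fun θ hθ => (S15.tp_continuousAt hd hts htsu hθc1 hsup hθ).continuousWithinAt
    · exact S15.tm_tendsto hd hts htsu hθc1 (hsub θc hθc1 le_rfl) hsup
    · exact S15.tp_tendsto hd hts htsu hθc1 (hsub θc hθc1 le_rfl) hsup
end

section
/- Let β < 0 and for a, b ∈ (0,1) define g(a,b) = [e^{−β} − (e^{β}+e^{−β})(ab + (1−a)(1−b))] / [e^{−β} − (e^{−β}−e^{β})(ab + (1−a)(1−b))]. Then the partial derivative ∂g/∂b(a,b) is positive if a < 1/2, zero if a = 1/2, and negative if a > 1/2. Consequently, for any 0 < h^- ≤ 1/2 ≤ h^+ < 1 and all a, b ∈ [h^-, h^+], one has g(a,b) ≤ g(h^-, h^+) = g(h^+, h^-). -/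
open Set

/-- The negative edge correlation `−⟨σ_o σ_j⟩` for the Ising model at inverse
temperature `β`, when the two directed messages along the edge assign
probabilities `a` and `b` to spin `+1`. -/
noncomputable def isingG (β a b : ℝ) : ℝ :=
  (Real.exp (-β) - (Real.exp β + Real.exp (-β)) * (a * b + (1 - a) * (1 - b))) /
  (Real.exp (-β) - (Real.exp (-β) - Real.exp β) * (a * b + (1 - a) * (1 - b)))

lemma isingS_mem (a b : ℝ) (ha0 : 0 ≤ a) (ha1 : a ≤ 1) (hb0 : 0 ≤ b) (hb1 : b ≤ 1) :
    0 ≤ a * b + (1 - a) * (1 - b) ∧ a * b + (1 - a) * (1 - b) ≤ 1 := by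
  constructor <;> nlinarith [mul_nonneg ha0 hb0, mul_nonneg (sub_nonneg.2 ha1) (sub_nonneg.2 hb1),
    mul_nonneg ha0 (sub_nonneg.2 hb1), mul_nonneg (sub_nonneg.2 ha1) hb0]

lemma isingDen_pos (β s : ℝ) (hβ : β < 0) (hs0 : 0 ≤ s) (hs1 : s ≤ 1) :
    0 < Real.exp (-β) - (Real.exp (-β) - Real.exp β) * s := by
  have hEF : Real.exp β < Real.exp (-β) := Real.exp_lt_exp.2 (by linarith)
  have hF : 0 < Real.exp β := Real.exp_pos _
  nlinarith

lemma isingF_mono (β s t : ℝ) (hβ : β < 0) (hs0 : 0 ≤ s) (hst : s ≤ t) (ht1 : t ≤ 1) :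
    (Real.exp (-β) - (Real.exp β + Real.exp (-β)) * t) /
      (Real.exp (-β) - (Real.exp (-β) - Real.exp β) * t) ≤
    (Real.exp (-β) - (Real.exp β + Real.exp (-β)) * s) /
      (Real.exp (-β) - (Real.exp (-β) - Real.exp β) * s) := by
  have hds := isingDen_pos β s hβ hs0 (hst.trans ht1)
  have hdt := isingDen_pos β t hβ (hs0.trans hst) ht1
  rw [div_le_div_iff₀ hdt hds]
  have hE : 0 < Real.exp (-β) := Real.exp_pos _
  have hF : 0 < Real.exp β := Real.exp_pos _
  nlinarith [mul_pos hE hF, mul_nonneg (mul_pos hE hF).le (sub_nonneg.2 hst)]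

theorem stmt16 (β : ℝ) (hβ : β < 0) :
    (∀ a ∈ Ioo (0:ℝ) 1, ∀ b ∈ Ioo (0:ℝ) 1,
      ∃ D : ℝ, HasDerivAt (fun y => isingG β a y) D b ∧
        (a < 1/2 → 0 < D) ∧ (a = 1/2 → D = 0) ∧ (1/2 < a → D < 0)) ∧
    (∀ hm hp : ℝ, 0 < hm → hm ≤ 1/2 → 1/2 ≤ hp → hp < 1 →
      (∀ a ∈ Icc hm hp, ∀ b ∈ Icc hm hp, isingG β a b ≤ isingG β hm hp) ∧
      isingG β hm hp = isingG β hp hm) := by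
  set E := Real.exp (-β) with hEdef
  set F := Real.exp β with hFdef
  have hE : 0 < E := Real.exp_pos _
  have hF : 0 < F := Real.exp_pos _
  constructor
  · rintro a ⟨ha0, ha1⟩ b ⟨hb0, hb1⟩
    have hsmem := isingS_mem a b ha0.le ha1.le hb0.le hb1.le
    have hden := isingDen_pos β (a * b + (1 - a) * (1 - b)) hβ hsmem.1 hsmem.2
    set s : ℝ := a * b + (1 - a) * (1 - b) with hsdef
    have hs : HasDerivAt (fun y : ℝ => a * y + (1 - a) * (1 - y)) (2 * a - 1) b := by
      have h1 : HasDerivAt (fun y : ℝ => a * y) a b := by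
        simpa using (hasDerivAt_id b).const_mul a
      have h2 : HasDerivAt (fun y : ℝ => (1 - a) * (1 - y)) (-(1 - a)) b := by
        have := ((hasDerivAt_id b).const_sub 1).const_mul (1 - a)
        simpa using this
      have := h1.add h2
      exact this.congr_deriv (by ring)
    have hN : HasDerivAt (fun y : ℝ => E - (F + E) * (a * y + (1 - a) * (1 - y)))
        (-((F + E) * (2 * a - 1))) b := (hs.const_mul (F + E)).const_sub E
    have hD : HasDerivAt (fun y : ℝ => E - (E - F) * (a * y + (1 - a) * (1 - y)))
        (-((E - F) * (2 * a - 1))) b := (hs.const_mul (E - F)).const_sub E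
    have hq := hN.div hD hden.ne'
    have hden' : 0 < E - (E - F) * s := hden
    have heq : (-((F + E) * (2 * a - 1)) * (E - (E - F) * (a * b + (1 - a) * (1 - b))) -
        (E - (F + E) * (a * b + (1 - a) * (1 - b))) * -((E - F) * (2 * a - 1))) /
        (E - (E - F) * (a * b + (1 - a) * (1 - b))) ^ 2
        = (1 - 2 * a) * (2 * E * F) / (E - (E - F) * (a * b + (1 - a) * (1 - b))) ^ 2 := by
      congr 1; ring
    refine ⟨_, hq, ?_, ?_, ?_⟩
    · intro hha
      rw [heq]
      exact div_pos (by nlinarith [mul_pos hE hF]) (pow_pos hden' 2)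
    · intro hha
      rw [heq, hha]
      norm_num
    · intro hha
      rw [heq]
      exact div_neg_of_neg_of_pos (by nlinarith [mul_pos hE hF]) (pow_pos hden' 2)
  · intro hm hp hm0 hm2 hp2 hp1
    constructor
    · rintro a ⟨ha0, ha1⟩ b ⟨hb0, hb1⟩
      have hsab := isingS_mem a b (hm0.le.trans ha0) (ha1.trans hp1.le)
        (hm0.le.trans hb0) (hb1.trans hp1.le)
      have hkey : hm * hp + (1 - hm) * (1 - hp) ≤ a * b + (1 - a) * (1 - b) := by
        rcases le_total a (1/2) with h | h
        · nlinarith [mul_nonneg (sub_nonneg.2 h) (sub_nonneg.2 hb1),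
            mul_nonneg (sub_nonneg.2 ha0) (sub_nonneg.2 hp2)]
        · nlinarith [mul_nonneg (sub_nonneg.2 h) (sub_nonneg.2 hb0),
            mul_nonneg (sub_nonneg.2 ha1) (sub_nonneg.2 hm2)]
      exact isingF_mono β _ _ hβ
        (isingS_mem hm hp hm0.le (by linarith) (by linarith) hp1.le).1 hkey hsab.2
    · unfold isingG; ring_nf
end
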